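/- arXiv:1710.00520 — 7 statements merged into one kernel-verified Lean document; each statement's English description precedes it below -/
import Mathlib

section
/- Let C be a cone in a real vector space and f : C × C → ℝ a symmetric function that is bilinear with respect to nonnegative linear combinations (i.e., f(λ₁u₁ + λ₂u₂, μ₁v₁ + μ₂v₂) = Σᵢⱼ λᵢμⱼ f(uᵢ, vⱼ) for all λᵢ, μᵢ ≥ 0 and uᵢ, vᵢ ∈ C) and which satisfies the Alexandrov–Fenchel type relation f(u,v)² ≥ f(u,u)·f(v,v) for all u, v ∈ C. Then for any r ≥ 1 and any u₀, u₁, …, u_r ∈ C, setting d_{ij} = f(uᵢ, uⱼ), the r × r matrix with (i,j) entry d_{0i}d_{0j} − d_{00}d_{ij} (for 1 ≤ i, j ≤ r) is positive semidefinite. -/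
section AFhelp

variable {V : Type*} [AddCommGroup V] [Module ℝ V]
variable {C : Set V} {f : V → V → ℝ}





lemma af_smul_left
    (hbilin : ∀ (a₁ a₂ b₁ b₂ : ℝ), 0 ≤ a₁ → 0 ≤ a₂ → 0 ≤ b₁ → 0 ≤ b₂ →
      ∀ u₁ ∈ C, ∀ u₂ ∈ C, ∀ v₁ ∈ C, ∀ v₂ ∈ C,
        f (a₁ • u₁ + a₂ • u₂) (b₁ • v₁ + b₂ • v₂) =
          a₁ * b₁ * f u₁ v₁ + a₁ * b₂ * f u₁ v₂ + a₂ * b₁ * f u₂ v₁ + a₂ * b₂ * f u₂ v₂)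
    {a : ℝ} (ha : 0 ≤ a) {u v : V} (hu : u ∈ C) (hv : v ∈ C) :
    f (a • u) v = a * f u v := by
  have h := hbilin a 0 1 0 ha le_rfl zero_le_one le_rfl u hu u hu v hv v hv
  simpa using h

lemma af_add_left
    (hbilin : ∀ (a₁ a₂ b₁ b₂ : ℝ), 0 ≤ a₁ → 0 ≤ a₂ → 0 ≤ b₁ → 0 ≤ b₂ →
      ∀ u₁ ∈ C, ∀ u₂ ∈ C, ∀ v₁ ∈ C, ∀ v₂ ∈ C,
        f (a₁ • u₁ + a₂ • u₂) (b₁ • v₁ + b₂ • v₂) =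
          a₁ * b₁ * f u₁ v₁ + a₁ * b₂ * f u₁ v₂ + a₂ * b₁ * f u₂ v₁ + a₂ * b₂ * f u₂ v₂)
    {u₁ u₂ v : V} (h₁ : u₁ ∈ C) (h₂ : u₂ ∈ C) (hv : v ∈ C) :
    f (u₁ + u₂) v = f u₁ v + f u₂ v := by
  have h := hbilin 1 1 1 0 zero_le_one zero_le_one zero_le_one le_rfl u₁ h₁ u₂ h₂ v hv v hv
  simpa using h

lemma af_mem_sum
    (hC_add : ∀ u ∈ C, ∀ v ∈ C, u + v ∈ C)
    (hC_smul : ∀ (a : ℝ), 0 ≤ a → ∀ u ∈ C, a • u ∈ C)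
    {ι : Type*} (s : Finset ι) (c : ι → ℝ) (v : ι → V)
    (hc : ∀ i, 0 ≤ c i) (hv : ∀ i, v i ∈ C) {w : V} (hw : w ∈ C) :
    (∑ i ∈ s, c i • v i) ∈ C := by
  classical
  induction s using Finset.induction_on with
  | empty => simpa using hC_smul 0 le_rfl w hw
  | insert _ _ hnot ih =>
      rw [Finset.sum_insert hnot]
      exact hC_add _ (hC_smul _ (hc _) _ (hv _)) _ ih

lemma af_sum_left
    (hC_add : ∀ u ∈ C, ∀ v ∈ C, u + v ∈ C)
    (hC_smul : ∀ (a : ℝ), 0 ≤ a → ∀ u ∈ C, a • u ∈ C)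
    (hbilin : ∀ (a₁ a₂ b₁ b₂ : ℝ), 0 ≤ a₁ → 0 ≤ a₂ → 0 ≤ b₁ → 0 ≤ b₂ →
      ∀ u₁ ∈ C, ∀ u₂ ∈ C, ∀ v₁ ∈ C, ∀ v₂ ∈ C,
        f (a₁ • u₁ + a₂ • u₂) (b₁ • v₁ + b₂ • v₂) =
          a₁ * b₁ * f u₁ v₁ + a₁ * b₂ * f u₁ v₂ + a₂ * b₁ * f u₂ v₁ + a₂ * b₂ * f u₂ v₂)
    {ι : Type*} (s : Finset ι) (c : ι → ℝ) (v : ι → V)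
    (hc : ∀ i, 0 ≤ c i) (hv : ∀ i, v i ∈ C) {w : V} (hw : w ∈ C) :
    f (∑ i ∈ s, c i • v i) w = ∑ i ∈ s, c i * f (v i) w := by
  classical
  induction s using Finset.induction_on with
  | empty => simpa using af_smul_left hbilin le_rfl hw hw
  | insert _ _ hnot ih =>
      rw [Finset.sum_insert hnot, Finset.sum_insert hnot,
        af_add_left hbilin (hC_smul _ (hc _) _ (hv _))
          (af_mem_sum hC_add hC_smul _ c v hc hv hw) hw,
        af_smul_left hbilin (hc _) (hv _) hw, ih]




lemma af_real_aux (c0 c1 E R : ℝ)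
    (h : ∀ s : ℝ, 0 ≤ s → R ≤ (c1 * s + c0 * s ^ 2) * E) :
    0 ≤ c0 * E := by
  by_contra hcon
  push_neg at hcon
  set K : ℝ := -(c0 * E) with hK
  have hKpos : 0 < K := by rw [hK]; linarith
  set A : ℝ := |c1 * E| + |R| + 1 with hA
  have hApos : 0 < A := by positivity
  set s : ℝ := A / K + 1 with hs
  have hs0 : (0:ℝ) ≤ s := by positivity
  have hs1 : (1:ℝ) ≤ s := by
    have h' : 0 ≤ A / K := by positivity
    rw [hs]; linarith
  have hKs : K * s = A + K := by
    rw [hs]; field_simp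
  have key := h s hs0
  have e1 : (c1 * s + c0 * s ^ 2) * E = s * (c1 * E) - s * (K * s) := by
    rw [hK]; ring
  have e2 : s * (c1 * E) ≤ s * |c1 * E| :=
    mul_le_mul_of_nonneg_left (le_abs_self _) hs0
  have e3 : s * (c1 * E) - s * (K * s) ≤ s * (|c1 * E| - (A + K)) := by
    rw [hKs, mul_sub]
    linarith
  have e4 : |c1 * E| - (A + K) = -(|R| + 1 + K) := by rw [hA]; ring
  have e5 : s * (-(|R| + 1 + K)) ≤ 1 * (-(|R| + 1 + K)) := by
    apply mul_le_mul_of_nonpos_right hs1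
    have := abs_nonneg R
    linarith
  have e6 : -|R| ≤ R := neg_abs_le R
  rw [e1] at key
  rw [e4] at e3
  linarith





lemma af_addsmul_left
    (hC_smul : ∀ (a : ℝ), 0 ≤ a → ∀ u ∈ C, a • u ∈ C)
    (hbilin : ∀ (a₁ a₂ b₁ b₂ : ℝ), 0 ≤ a₁ → 0 ≤ a₂ → 0 ≤ b₁ → 0 ≤ b₂ →
      ∀ u₁ ∈ C, ∀ u₂ ∈ C, ∀ v₁ ∈ C, ∀ v₂ ∈ C,
        f (a₁ • u₁ + a₂ • u₂) (b₁ • v₁ + b₂ • v₂) =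
          a₁ * b₁ * f u₁ v₁ + a₁ * b₂ * f u₁ v₂ + a₂ * b₁ * f u₂ v₁ + a₂ * b₂ * f u₂ v₂)
    {c : ℝ} (hc : 0 ≤ c) {x u0 y : V} (hx : x ∈ C) (h0 : u0 ∈ C) (hy : y ∈ C) :
    f (x + c • u0) y = f x y + c * f u0 y := by
  rw [af_add_left hbilin hx (hC_smul c hc u0 h0) hy, af_smul_left hbilin hc h0 hy]

lemma af_shift
    (hC_add : ∀ u ∈ C, ∀ v ∈ C, u + v ∈ C)
    (hC_smul : ∀ (a : ℝ), 0 ≤ a → ∀ u ∈ C, a • u ∈ C)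
    (hsymm : ∀ u ∈ C, ∀ v ∈ C, f u v = f v u)
    (hbilin : ∀ (a₁ a₂ b₁ b₂ : ℝ), 0 ≤ a₁ → 0 ≤ a₂ → 0 ≤ b₁ → 0 ≤ b₂ →
      ∀ u₁ ∈ C, ∀ u₂ ∈ C, ∀ v₁ ∈ C, ∀ v₂ ∈ C,
        f (a₁ • u₁ + a₂ • u₂) (b₁ • v₁ + b₂ • v₂) =
          a₁ * b₁ * f u₁ v₁ + a₁ * b₂ * f u₁ v₂ + a₂ * b₁ * f u₂ v₁ + a₂ * b₂ * f u₂ v₂)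
    {s t : ℝ} (hs : 0 ≤ s) (ht : 0 ≤ t) {x u0 y : V} (hx : x ∈ C) (h0 : u0 ∈ C) (hy : y ∈ C) :
    f (x + s • u0) (y + t • u0) =
      f x y + t * f u0 x + s * f u0 y + s * t * f u0 u0 := by
  have hys : y + t • u0 ∈ C := hC_add y hy _ (hC_smul t ht u0 h0)
  rw [af_addsmul_left hC_smul hbilin hs hx h0 hys,
    hsymm x hx _ hys, af_addsmul_left hC_smul hbilin ht hy h0 hx,
    hsymm u0 h0 _ hys, af_addsmul_left hC_smul hbilin ht hy h0 h0,
    hsymm y hy x hx, hsymm y hy u0 h0]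
  ring

lemma af_key
    (hC_add : ∀ u ∈ C, ∀ v ∈ C, u + v ∈ C)
    (hC_smul : ∀ (a : ℝ), 0 ≤ a → ∀ u ∈ C, a • u ∈ C)
    (hsymm : ∀ u ∈ C, ∀ v ∈ C, f u v = f v u)
    (hbilin : ∀ (a₁ a₂ b₁ b₂ : ℝ), 0 ≤ a₁ → 0 ≤ a₂ → 0 ≤ b₁ → 0 ≤ b₂ →
      ∀ u₁ ∈ C, ∀ u₂ ∈ C, ∀ v₁ ∈ C, ∀ v₂ ∈ C,
        f (a₁ • u₁ + a₂ • u₂) (b₁ • v₁ + b₂ • v₂) =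
          a₁ * b₁ * f u₁ v₁ + a₁ * b₂ * f u₁ v₂ + a₂ * b₁ * f u₂ v₁ + a₂ * b₂ * f u₂ v₂)
    (hAF : ∀ u ∈ C, ∀ v ∈ C, f u u * f v v ≤ (f u v) ^ 2)
    {x u0 y : V} (hx : x ∈ C) (h0 : u0 ∈ C) (hy : y ∈ C)
    (hxy : f u0 x = f u0 y) :
    0 ≤ f u0 u0 * (2 * f x y - f x x - f y y) := by
  have h := af_real_aux (f u0 u0) (2 * f u0 x)
    (2 * f x y - f x x - f y y) (f x x * f y y - f x y ^ 2) ?_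
  · linarith [h]
  intro s hs
  have hxs : x + s • u0 ∈ C := hC_add x hx _ (hC_smul s hs u0 h0)
  have hys : y + s • u0 ∈ C := hC_add y hy _ (hC_smul s hs u0 h0)
  have haf := hAF _ hxs _ hys
  rw [af_shift hC_add hC_smul hsymm hbilin hs hs hx h0 hx,
    af_shift hC_add hC_smul hsymm hbilin hs hs hy h0 hy,
    af_shift hC_add hC_smul hsymm hbilin hs hs hx h0 hy] at haf
  rw [← hxy] at haf
  nlinarith [haf]





lemma af_core
    (hC_add : ∀ u ∈ C, ∀ v ∈ C, u + v ∈ C)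
    (hC_smul : ∀ (a : ℝ), 0 ≤ a → ∀ u ∈ C, a • u ∈ C)
    (hsymm : ∀ u ∈ C, ∀ v ∈ C, f u v = f v u)
    (hbilin : ∀ (a₁ a₂ b₁ b₂ : ℝ), 0 ≤ a₁ → 0 ≤ a₂ → 0 ≤ b₁ → 0 ≤ b₂ →
      ∀ u₁ ∈ C, ∀ u₂ ∈ C, ∀ v₁ ∈ C, ∀ v₂ ∈ C,
        f (a₁ • u₁ + a₂ • u₂) (b₁ • v₁ + b₂ • v₂) =
          a₁ * b₁ * f u₁ v₁ + a₁ * b₂ * f u₁ v₂ + a₂ * b₁ * f u₂ v₁ + a₂ * b₂ * f u₂ v₂)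
    (hAF : ∀ u ∈ C, ∀ v ∈ C, f u u * f v v ≤ (f u v) ^ 2)
    {u0 p n : V} (h0 : u0 ∈ C) (hp : p ∈ C) (hn : n ∈ C) :
    0 ≤ (f u0 p - f u0 n) ^ 2 - f u0 u0 * (f p p - 2 * f p n + f n n) := by
  by_cases hd : f u0 u0 = 0
  · rw [hd]
    simp only [zero_mul, sub_zero]
    positivity
  rcases le_or_gt 0 ((f u0 p - f u0 n) / f u0 u0) with hc | hc
  · -- shift n
    set c : ℝ := (f u0 p - f u0 n) / f u0 u0 with hcdef
    set n' : V := n + c • u0 with hn'def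
    have hn' : n' ∈ C := hC_add n hn _ (hC_smul c hc u0 h0)
    have hval : f u0 n' = f u0 p := by
      rw [hsymm u0 h0 _ hn', hn'def, af_addsmul_left hC_smul hbilin hc hn h0 h0,
        hsymm n hn u0 h0, hcdef]
      field_simp
      ring
    have hpn' : f p n' = f p n + c * f u0 p := by
      rw [hsymm p hp _ hn', hn'def, af_addsmul_left hC_smul hbilin hc hn h0 hp,
        hsymm n hn p hp, hsymm u0 h0 p hp]
    have hnn' : f n' n' = f n n + c * f u0 n + c * f u0 p := by
      rw [hn'def, af_addsmul_left hC_smul hbilin hc hn h0 hn',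
        hsymm n hn _ hn', af_addsmul_left hC_smul hbilin hc hn h0 hn,
        hval]
    have hkey := af_key hC_add hC_smul hsymm hbilin hAF hp h0 hn' hval.symm
    have heq : (f u0 p - f u0 n) ^ 2 - f u0 u0 * (f p p - 2 * f p n + f n n) =
        f u0 u0 * (2 * f p n' - f p p - f n' n') := by
      rw [hpn', hnn', hcdef]
      field_simp
      ring
    rw [heq]
    exact hkey
  · -- shift p
    set c : ℝ := (f u0 n - f u0 p) / f u0 u0 with hcdef
    have hc' : 0 ≤ c := by
      rw [hcdef]
      have : (f u0 p - f u0 n) / f u0 u0 = -((f u0 n - f u0 p) / f u0 u0) := by ring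
      rw [this] at hc
      linarith
    set p' : V := p + c • u0 with hp'def
    have hp' : p' ∈ C := hC_add p hp _ (hC_smul c hc' u0 h0)
    have hval : f u0 p' = f u0 n := by
      rw [hsymm u0 h0 _ hp', hp'def, af_addsmul_left hC_smul hbilin hc' hp h0 h0,
        hsymm p hp u0 h0, hcdef]
      field_simp
      ring
    have hpn' : f p' n = f p n + c * f u0 n := by
      rw [hp'def, af_addsmul_left hC_smul hbilin hc' hp h0 hn]
    have hpp' : f p' p' = f p p + c * f u0 p + c * f u0 n := by
      rw [hp'def, af_addsmul_left hC_smul hbilin hc' hp h0 hp',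
        hsymm p hp _ hp', af_addsmul_left hC_smul hbilin hc' hp h0 hp,
        hval]
    have hkey := af_key hC_add hC_smul hsymm hbilin hAF hp' h0 hn hval
    have heq : (f u0 p - f u0 n) ^ 2 - f u0 u0 * (f p p - 2 * f p n + f n n) =
        f u0 u0 * (2 * f p' n - f p' p' - f n n) := by
      rw [hpn', hpp', hcdef]
      field_simp
      ring
    rw [heq]
    have : f u0 u0 * (2 * f p' n - f p' p' - f n n) =
        f u0 u0 * (2 * f p' n - f p' p' - f n n) := rfl
    linarith [hkey]


end AFhelp

/-- For a symmetric, nonnegatively-bilinear function `f` on a convex cone `C`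
satisfying the Alexandrov–Fenchel type relation `f(u,v)² ≥ f(u,u)f(v,v)`, the `r × r` matrix
with entries `d₀ᵢd₀ⱼ − d₀₀dᵢⱼ` (where `dᵢⱼ = f(uᵢ,uⱼ)`) is positive semidefinite. -/
theorem af_determinantal_psd {V : Type*} [AddCommGroup V] [Module ℝ V] (C : Set V)
    (hC_add : ∀ u ∈ C, ∀ v ∈ C, u + v ∈ C)
    (hC_smul : ∀ (a : ℝ), 0 ≤ a → ∀ u ∈ C, a • u ∈ C)
    (f : V → V → ℝ)
    (hsymm : ∀ u ∈ C, ∀ v ∈ C, f u v = f v u)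
    (hbilin : ∀ (a₁ a₂ b₁ b₂ : ℝ), 0 ≤ a₁ → 0 ≤ a₂ → 0 ≤ b₁ → 0 ≤ b₂ →
      ∀ u₁ ∈ C, ∀ u₂ ∈ C, ∀ v₁ ∈ C, ∀ v₂ ∈ C,
        f (a₁ • u₁ + a₂ • u₂) (b₁ • v₁ + b₂ • v₂) =
          a₁ * b₁ * f u₁ v₁ + a₁ * b₂ * f u₁ v₂ + a₂ * b₁ * f u₂ v₁ + a₂ * b₂ * f u₂ v₂)
    (hAF : ∀ u ∈ C, ∀ v ∈ C, f u u * f v v ≤ (f u v) ^ 2)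
    (r : ℕ) (hr : 1 ≤ r) (u : Fin (r + 1) → V) (hu : ∀ i, u i ∈ C)
    (lam : Fin r → ℝ) :
    0 ≤ ∑ i : Fin r, ∑ j : Fin r, lam i * lam j *
      (f (u 0) (u i.succ) * f (u 0) (u j.succ) - f (u 0) (u 0) * f (u i.succ) (u j.succ)) := by
  classical
  set u0 : V := u 0 with hu0
  have h0 : u0 ∈ C := hu 0
  set g : Fin r → V := fun i => u i.succ with hg
  have hgC : ∀ i, g i ∈ C := fun i => hu _
  set pos : Fin r → ℝ := fun i => max (lam i) 0 with hposdef
  set neg : Fin r → ℝ := fun i => max (-lam i) 0 with hnegdef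
  have hposn : ∀ i, 0 ≤ pos i := fun i => le_max_right _ _
  have hnegn : ∀ i, 0 ≤ neg i := fun i => le_max_right _ _
  have hlam : ∀ i, lam i = pos i - neg i := by
    intro i
    rcases le_total 0 (lam i) with h | h
    · simp [hposdef, hnegdef, max_eq_left h, max_eq_right (neg_nonpos_of_nonneg h)]
    · simp [hposdef, hnegdef, max_eq_right h, max_eq_left (neg_nonneg.mpr h)]
  set p : V := ∑ i : Fin r, pos i • g i with hpdef
  set n : V := ∑ i : Fin r, neg i • g i with hndef
  have hp : p ∈ C := af_mem_sum hC_add hC_smul _ _ _ hposn hgC h0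
  have hn : n ∈ C := af_mem_sum hC_add hC_smul _ _ _ hnegn hgC h0
  -- expansions
  have hDsymm : ∀ i j, f (g i) (g j) = f (g j) (g i) := fun i j =>
    hsymm _ (hgC i) _ (hgC j)
  have hfu0p : f u0 p = ∑ i : Fin r, pos i * f u0 (g i) := by
    rw [hsymm u0 h0 p hp, hpdef, af_sum_left hC_add hC_smul hbilin _ _ _ hposn hgC h0]
    exact Finset.sum_congr rfl fun i _ => by rw [hsymm (g i) (hgC i) u0 h0]
  have hfu0n : f u0 n = ∑ i : Fin r, neg i * f u0 (g i) := by
    rw [hsymm u0 h0 n hn, hndef, af_sum_left hC_add hC_smul hbilin _ _ _ hnegn hgC h0]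
    exact Finset.sum_congr rfl fun i _ => by rw [hsymm (g i) (hgC i) u0 h0]
  have hexp : ∀ (c c' : Fin r → ℝ), (∀ i, 0 ≤ c i) → (∀ i, 0 ≤ c' i) →
      f (∑ i : Fin r, c i • g i) (∑ i : Fin r, c' i • g i) =
        ∑ i : Fin r, ∑ j : Fin r, c i * c' j * f (g i) (g j) := by
    intro c c' hcn hc'n
    have hmem : (∑ i : Fin r, c' i • g i) ∈ C := af_mem_sum hC_add hC_smul _ _ _ hc'n hgC h0
    rw [af_sum_left hC_add hC_smul hbilin _ _ _ hcn hgC hmem]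
    refine Finset.sum_congr rfl fun i _ => ?_
    rw [hsymm (g i) (hgC i) _ hmem, af_sum_left hC_add hC_smul hbilin _ _ _ hc'n hgC (hgC i),
      Finset.mul_sum]
    exact Finset.sum_congr rfl fun j _ => by rw [hDsymm j i]; ring
  have hfpp := hexp pos pos hposn hposn
  have hfpn := hexp pos neg hposn hnegn
  have hfnp := hexp neg pos hnegn hposn
  have hfnn := hexp neg neg hnegn hnegn
  have hmain : (∑ i : Fin r, ∑ j : Fin r, lam i * lam j *
      (f u0 (g i) * f u0 (g j) - f u0 u0 * f (g i) (g j))) =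
      (f u0 p - f u0 n) ^ 2 - f u0 u0 * (f p p - 2 * f p n + f n n) := by
    rw [hfu0p, hfu0n, hpdef, hndef, hfpp, hfnn]
    have hpn2 : f (∑ i : Fin r, pos i • g i) (∑ i : Fin r, neg i • g i) +
        f (∑ i : Fin r, neg i • g i) (∑ i : Fin r, pos i • g i) =
        ∑ i : Fin r, ∑ j : Fin r,
          (pos i * neg j + neg i * pos j) * f (g i) (g j) := by
      rw [hfpn, hfnp, ← Finset.sum_add_distrib]
      exact Finset.sum_congr rfl fun i _ => by
        rw [← Finset.sum_add_distrib]
        exact Finset.sum_congr rfl fun j _ => by ring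
    have hsymmpn : f (∑ i : Fin r, neg i • g i) (∑ i : Fin r, pos i • g i) =
        f (∑ i : Fin r, pos i • g i) (∑ i : Fin r, neg i • g i) := by
      rw [hsymm _ (af_mem_sum hC_add hC_smul _ _ _ hnegn hgC h0) _
        (af_mem_sum hC_add hC_smul _ _ _ hposn hgC h0)]
    rw [hsymmpn] at hpn2
    have h2pn : 2 * f (∑ i : Fin r, pos i • g i) (∑ i : Fin r, neg i • g i) =
        ∑ i : Fin r, ∑ j : Fin r, (pos i * neg j + neg i * pos j) * f (g i) (g j) := by
      rw [← hpn2]; ring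
    have hA : (∑ i : Fin r, pos i * f u0 (g i)) - (∑ i : Fin r, neg i * f u0 (g i)) =
        ∑ i : Fin r, lam i * f u0 (g i) := by
      rw [← Finset.sum_sub_distrib]
      exact Finset.sum_congr rfl fun i _ => by rw [hlam i]; ring
    rw [hA, h2pn]
    have hsq : (∑ i : Fin r, lam i * f u0 (g i)) ^ 2 =
        ∑ i : Fin r, ∑ j : Fin r, (lam i * f u0 (g i)) * (lam j * f u0 (g j)) := by
      rw [sq, Finset.sum_mul_sum]
    rw [hsq]
    have hT : (∑ i : Fin r, ∑ j : Fin r, pos i * pos j * f (g i) (g j)) -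
        (∑ i : Fin r, ∑ j : Fin r, (pos i * neg j + neg i * pos j) * f (g i) (g j)) +
        (∑ i : Fin r, ∑ j : Fin r, neg i * neg j * f (g i) (g j)) =
        ∑ i : Fin r, ∑ j : Fin r, lam i * lam j * f (g i) (g j) := by
      rw [← Finset.sum_sub_distrib, ← Finset.sum_add_distrib]
      refine Finset.sum_congr rfl fun i _ => ?_
      rw [← Finset.sum_sub_distrib, ← Finset.sum_add_distrib]
      refine Finset.sum_congr rfl fun j _ => ?_
      rw [hlam i, hlam j]; ring
    rw [hT]
    simp only [Finset.mul_sum]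
    rw [← Finset.sum_sub_distrib]
    refine Finset.sum_congr rfl fun i _ => ?_
    rw [← Finset.sum_sub_distrib]
    refine Finset.sum_congr rfl fun j _ => ?_
    ring
  rw [hmain]
  exact af_core hC_add hC_smul hsymm hbilin hAF h0 hp hn
end

section
/- Let C be a convex cone in a real vector space and f : C × C → ℝ a symmetric, nonnegatively bilinear function satisfying f(u,v)² ≥ f(u,u)f(v,v) for all u, v ∈ C. Then for any r ≥ 1 and any u₀, …, u_r ∈ C with d_{ij} = f(uᵢ, uⱼ), one has (−1)^r · d_{00}^{r−1} · det((d_{ij})_{0 ≤ i,j ≤ r}) ≥ 0. -/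
namespace AFaux

open Finset

variable {n : ℕ}

/-- The bilinear form of a matrix, as a double sum. -/
def bq (D : Matrix (Fin n) (Fin n) ℝ) (x y : Fin n → ℝ) : ℝ :=
  ∑ i, ∑ j, x i * y j * D i j

lemma bq_add_left (D : Matrix (Fin n) (Fin n) ℝ) (x y z : Fin n → ℝ) :
    bq D (x + y) z = bq D x z + bq D y z := by
  simp [bq, add_mul, Finset.sum_add_distrib]

lemma bq_add_right (D : Matrix (Fin n) (Fin n) ℝ) (x y z : Fin n → ℝ) :
    bq D x (y + z) = bq D x y + bq D x z := by
  simp [bq, mul_add, add_mul, Finset.sum_add_distrib]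

lemma bq_smul_left (D : Matrix (Fin n) (Fin n) ℝ) (t : ℝ) (x z : Fin n → ℝ) :
    bq D (t • x) z = t * bq D x z := by
  unfold bq
  rw [Finset.mul_sum]
  refine Finset.sum_congr rfl fun i _ => ?_
  rw [Finset.mul_sum]
  refine Finset.sum_congr rfl fun j _ => ?_
  simp; ring

lemma bq_smul_right (D : Matrix (Fin n) (Fin n) ℝ) (t : ℝ) (x z : Fin n → ℝ) :
    bq D x (t • z) = t * bq D x z := by
  unfold bq
  rw [Finset.mul_sum]
  refine Finset.sum_congr rfl fun i _ => ?_
  rw [Finset.mul_sum]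
  refine Finset.sum_congr rfl fun j _ => ?_
  simp; ring

lemma bq_sub_right (D : Matrix (Fin n) (Fin n) ℝ) (x y z : Fin n → ℝ) :
    bq D x (y - z) = bq D x y - bq D x z := by
  simp [bq, mul_sub, sub_mul, Finset.sum_sub_distrib]

lemma bq_symm (D : Matrix (Fin n) (Fin n) ℝ) (hD : ∀ i j, D i j = D j i)
    (x y : Fin n → ℝ) : bq D x y = bq D y x := by
  unfold bq
  rw [Finset.sum_comm]
  refine Finset.sum_congr rfl fun i _ => Finset.sum_congr rfl fun j _ => ?_
  rw [hD]; ring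

/-- If a quadratic is nonnegative on the positive reals, its constant term is nonnegative. -/
lemma quad_aux {a b c : ℝ} (h : ∀ t : ℝ, 0 < t → 0 ≤ a * t ^ 2 + b * t + c) : 0 ≤ c := by
  by_contra hc
  push_neg at hc
  set M : ℝ := |a| + |b| + 1 with hM
  have hM0 : 0 < M := by positivity
  set t : ℝ := min 1 (-c / (2 * M)) with htdef
  have ht0 : 0 < t := lt_min one_pos (div_pos (by linarith) (by positivity))
  have ht1 : t ≤ 1 := min_le_left _ _
  have ht2 : t ≤ -c / (2 * M) := min_le_right _ _
  have h1 : a * t ^ 2 ≤ |a| * t ^ 2 := mul_le_mul_of_nonneg_right (le_abs_self a) (sq_nonneg t)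
  have h2 : b * t ≤ |b| * t := mul_le_mul_of_nonneg_right (le_abs_self b) ht0.le
  have h3 : |a| * t ^ 2 ≤ |a| * t := by
    have : t ^ 2 ≤ t := by nlinarith
    exact mul_le_mul_of_nonneg_left this (abs_nonneg a)
  have h4 : (|a| + |b|) * t ≤ M * t := by nlinarith [abs_nonneg a, abs_nonneg b]
  have h5 : M * t ≤ M * (-c / (2 * M)) := mul_le_mul_of_nonneg_left ht2 hM0.le
  have h6 : M * (-c / (2 * M)) = -c / 2 := by field_simp
  have := h t ht0
  nlinarith


/-- Extension of the Alexandrov–Fenchel inequality from the nonnegative orthant to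
arbitrary second argument. -/
lemma stepA (D : Matrix (Fin n) (Fin n) ℝ) (hD : ∀ i j, D i j = D j i)
    (hK : ∀ x y : Fin n → ℝ, (∀ i, 0 ≤ x i) → (∀ i, 0 ≤ y i) →
      bq D x x * bq D y y ≤ (bq D x y) ^ 2)
    (x z : Fin n → ℝ) (hx : ∀ i, 0 ≤ x i) :
    bq D x x * bq D z z ≤ (bq D x z) ^ 2 := by
  set p : Fin n → ℝ := fun i => max (z i) 0 with hp
  set q : Fin n → ℝ := fun i => max (-(z i)) 0 with hq
  have hpn : ∀ i, 0 ≤ p i := fun i => le_max_right _ _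
  have hqn : ∀ i, 0 ≤ q i := fun i => le_max_right _ _
  have hz : z = p - q := by
    funext i
    simp only [Pi.sub_apply, hp, hq]
    rcases le_total (z i) 0 with h | h
    · rw [max_eq_right h, max_eq_left (by linarith)]; ring
    · rw [max_eq_left h, max_eq_right (by linarith)]; ring
  -- atoms
  set xx := bq D x x with hxx
  set xp := bq D x p with hxp
  set xq := bq D x q with hxq
  set pp := bq D p p with hpp
  set pq := bq D p q with hpq
  set qq := bq D q q with hqq
  have hsym_px : bq D p x = xp := bq_symm D hD p x
  have hsym_qx : bq D q x = xq := bq_symm D hD q x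
  have hsym_qp : bq D q p = pq := bq_symm D hD q p
  -- the quadratic in t is nonnegative for t > 0
  have key : ∀ t : ℝ, 0 < t →
      0 ≤ ((pp - qq) ^ 2 - (pp + 2 * pq + qq) * (pp - 2 * pq + qq)) * t ^ 2
        + (2 * (xp - xq) * (pp - qq) - 2 * (xp + xq) * (pp - 2 * pq + qq)) * t
        + ((xp - xq) ^ 2 - xx * (pp - 2 * pq + qq)) := by
    intro t ht
    have han : ∀ i, 0 ≤ (x + (2 * t) • p) i := by
      intro i
      have := hpn i
      have := hx i
      simp only [Pi.add_apply, Pi.smul_apply, smul_eq_mul]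
      nlinarith
    have hbn : ∀ i, 0 ≤ (x + (2 * t) • q) i := by
      intro i
      have := hqn i
      have := hx i
      simp only [Pi.add_apply, Pi.smul_apply, smul_eq_mul]
      nlinarith
    have H := hK _ _ han hbn
    have eab : bq D (x + (2 * t) • p) (x + (2 * t) • q)
        = xx + (2 * t) * xq + (2 * t) * xp + (2 * t) ^ 2 * pq := by
      rw [bq_add_left, bq_add_right, bq_add_right, bq_smul_left, bq_smul_left, bq_smul_right,
        bq_smul_right, hsym_px]
      ring
    have eaa : bq D (x + (2 * t) • p) (x + (2 * t) • p)
        = xx + 2 * (2 * t) * xp + (2 * t) ^ 2 * pp := by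
      rw [bq_add_left, bq_add_right, bq_add_right, bq_smul_left, bq_smul_left, bq_smul_right,
        bq_smul_right, hsym_px]
      ring
    have ebb : bq D (x + (2 * t) • q) (x + (2 * t) • q)
        = xx + 2 * (2 * t) * xq + (2 * t) ^ 2 * qq := by
      rw [bq_add_left, bq_add_right, bq_add_right, bq_smul_left, bq_smul_left, bq_smul_right,
        bq_smul_right, hsym_qx]
      ring
    rw [eab, eaa, ebb] at H
    have h4 : (0:ℝ) < 4 * t ^ 2 := by positivity
    nlinarith [H, h4]
  have hc := quad_aux key
  have exz : bq D x z = xp - xq := by rw [hz, bq_sub_right]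
  have ezz : bq D z z = pp - 2 * pq + qq := by
    rw [hz]
    rw [show p - q = p + (-1 : ℝ) • q by funext i; simp [sub_eq_add_neg]]
    rw [bq_add_left, bq_add_right, bq_add_right, bq_smul_left, bq_smul_left, bq_smul_right,
      bq_smul_right, hsym_qp]
    ring
  rw [exz, ezz]
  linarith


def ev (i : Fin n) : Fin n → ℝ := fun a => if a = i then 1 else 0

lemma ev_nonneg (i : Fin n) : ∀ a, 0 ≤ ev i a := by
  intro a; unfold ev; split <;> norm_num

lemma bq_single_left (D : Matrix (Fin n) (Fin n) ℝ) (i : Fin n) (z : Fin n → ℝ) :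
    bq D (ev i) z = ∑ j, z j * D i j := by
  unfold bq ev
  rw [Finset.sum_eq_single i]
  · simp
  · intro b _ hb; simp [hb]
  · simp

lemma psd_det_nonneg {m : ℕ} {M : Matrix (Fin m) (Fin m) ℝ} (h : M.PosSemidef) :
    0 ≤ M.det := by
  rw [h.isHermitian.det_eq_prod_eigenvalues]
  exact Finset.prod_nonneg fun i _ => by
    simpa using h.eigenvalues_nonneg i


lemma bq_ev (D : Matrix (Fin n) (Fin n) ℝ) (i j : Fin n) : bq D (ev i) (ev j) = D i j := by
  rw [bq_single_left]
  unfold ev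
  rw [Finset.sum_eq_single j]
  · simp
  · intro b _ hb; simp [hb]
  · simp

lemma main_matrix {r : ℕ} (hr : 1 ≤ r) (D : Matrix (Fin (r + 1)) (Fin (r + 1)) ℝ)
    (hD : ∀ i j, D i j = D j i)
    (hK : ∀ x y : Fin (r + 1) → ℝ, (∀ i, 0 ≤ x i) → (∀ i, 0 ≤ y i) →
      bq D x x * bq D y y ≤ (bq D x y) ^ 2) :
    0 ≤ (-1 : ℝ) ^ r * (D 0 0) ^ (r - 1) * D.det := by
  rcases eq_or_lt_of_le hr with h1 | h2
  · -- r = 1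
    obtain rfl : r = 1 := h1.symm
    have h := hK (ev 0) (ev 1) (ev_nonneg 0) (ev_nonneg 1)
    rw [bq_ev, bq_ev, bq_ev] at h
    rw [Matrix.det_fin_two, hD 1 0]
    norm_num
    nlinarith [h]
  · -- r ≥ 2
    by_cases hd : D 0 0 = 0
    · rw [hd, zero_pow (by omega : r - 1 ≠ 0)]
      simp
    · have hA := stepA D hD hK
      set E : Matrix (Fin r) (Fin r) ℝ :=
        Matrix.of (fun i j : Fin r => D 0 0 * D i.succ j.succ - D 0 i.succ * D 0 j.succ) with hE
      have hEpsd : (-E).PosSemidef := by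
        rw [Matrix.posSemidef_iff_dotProduct_mulVec]
        constructor
        · ext i j
          simp only [Matrix.conjTranspose_apply, Matrix.neg_apply, hE, Matrix.of_apply,
            star_trivial]
          rw [hD j.succ i.succ, hD (0 : Fin (r+1)) j.succ, hD (0 : Fin (r+1)) i.succ]
          ring
        · intro x
          set xt : Fin (r + 1) → ℝ := Fin.cons 0 x with hxt
          have hs : bq D (ev 0) xt = ∑ j : Fin r, x j * D 0 j.succ := by
            rw [bq_single_left, Fin.sum_univ_succ]
            simp [hxt]
          have hqq : bq D xt xt = ∑ i : Fin r, ∑ j : Fin r, x i * x j * D i.succ j.succ := by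
            unfold bq
            rw [Fin.sum_univ_succ]
            have h0 : ∑ j, xt 0 * xt j * D 0 j = 0 := by simp [hxt]
            rw [h0, zero_add]
            refine Finset.sum_congr rfl fun i _ => ?_
            rw [Fin.sum_univ_succ]
            simp [hxt]
          have hdot : dotProduct (star x) ((-E).mulVec x)
              = ∑ i : Fin r, ∑ j : Fin r,
                  x i * x j * (D 0 i.succ * D 0 j.succ - D 0 0 * D i.succ j.succ) := by
            simp only [star_trivial, dotProduct, Matrix.mulVec, Matrix.neg_apply, hE,
              Matrix.of_apply, Finset.mul_sum]
            refine Finset.sum_congr rfl fun i _ => Finset.sum_congr rfl fun j _ => ?_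
            ring
          have hfin : dotProduct (star x) ((-E).mulVec x)
              = (bq D (ev 0) xt) ^ 2 - bq D (ev 0) (ev 0) * bq D xt xt := by
            rw [hdot, hs, hqq, bq_ev, sq, Finset.sum_mul_sum, Finset.mul_sum,
              ← Finset.sum_sub_distrib]
            refine Finset.sum_congr rfl fun i _ => ?_
            rw [Finset.mul_sum, ← Finset.sum_sub_distrib]
            refine Finset.sum_congr rfl fun j _ => ?_
            ring
          have := hA (ev 0) xt (ev_nonneg 0)
          rw [hfin]
          linarith
      -- Schur complement determinant identity
      set ee : Fin 1 ⊕ Fin r ≃ Fin (r + 1) :=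
        finSumFinEquiv.trans (finCongr (Nat.add_comm 1 r)) with hee
      have heel : ∀ a : Fin 1, ee (Sum.inl a) = 0 := by
        intro a
        rw [Fin.fin_one_eq_zero a]
        apply Fin.ext
        simp [hee]
      have heer : ∀ b : Fin r, ee (Sum.inr b) = b.succ := by
        intro b
        apply Fin.ext
        simp [hee]
      set A1 : Matrix (Fin 1) (Fin 1) ℝ := Matrix.of fun _ _ => D 0 0 with hA1
      set B1 : Matrix (Fin 1) (Fin r) ℝ := Matrix.of fun _ j => D 0 j.succ with hB1
      set C1 : Matrix (Fin r) (Fin 1) ℝ := Matrix.of fun i _ => D i.succ 0 with hC1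
      set D1 : Matrix (Fin r) (Fin r) ℝ := Matrix.of fun i j => D i.succ j.succ with hD1
      have hblock : D.submatrix ee ee = Matrix.fromBlocks A1 B1 C1 D1 := by
        ext i j
        rcases i with a | i <;> rcases j with b | j <;>
          simp [Matrix.submatrix_apply, heel, heer, hA1, hB1, hC1, hD1]
      have hdetA1 : A1.det = D 0 0 := Matrix.det_fin_one A1
      haveI : Invertible A1 :=
        A1.invertibleOfIsUnitDet (by rw [hdetA1]; exact isUnit_iff_ne_zero.mpr hd)
      have hA1inv : A1⁻¹ = Matrix.of fun _ _ => (D 0 0)⁻¹ := by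
        apply Matrix.inv_eq_right_inv
        ext i j
        have hij : i = j := Subsingleton.elim i j
        subst hij
        simp [Matrix.mul_apply, Matrix.one_apply_eq, Fin.sum_univ_one, hA1]
        exact mul_inv_cancel₀ hd
      have hdet2 : D.det = D 0 0 * (D1 - C1 * A1⁻¹ * B1).det := by
        rw [← Matrix.det_submatrix_equiv_self ee D, hblock, Matrix.det_fromBlocks₁₁, hdetA1,
          Matrix.invOf_eq_nonsing_inv]
      have hEG : E = (D 0 0) • (D1 - C1 * A1⁻¹ * B1) := by
        ext i j
        rw [hA1inv]
        simp only [Matrix.smul_apply, Matrix.sub_apply, Matrix.mul_apply, Fin.sum_univ_one,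
          Matrix.of_apply, hE, hB1, hC1, hD1, smul_eq_mul]
        rw [hD i.succ 0]
        field_simp
      have hEdet : E.det = (D 0 0) ^ r * (D1 - C1 * A1⁻¹ * B1).det := by
        rw [hEG, Matrix.det_smul]
        simp [Fintype.card_fin]
      have h1 : (0 : ℝ) ≤ (-E).det := psd_det_nonneg hEpsd
      rw [Matrix.det_neg, Fintype.card_fin] at h1
      have hpow : (D 0 0) ^ (r - 1) * D 0 0 = (D 0 0) ^ r := by
        rw [← pow_succ]
        congr 1
        omega
      rw [hdet2]
      have hkey : (-1 : ℝ) ^ r * (D 0 0) ^ (r - 1) * (D 0 0 * (D1 - C1 * A1⁻¹ * B1).det)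
          = (-1) ^ r * E.det := by
        rw [hEdet, ← hpow]
        ring
      rw [hkey]
      exact h1

end AFaux

/-- For a symmetric, nonnegatively-bilinear function `f` on a convex cone `C`
satisfying the Alexandrov–Fenchel type relation, and any `u₀,…,u_r ∈ C` with
`dᵢⱼ = f(uᵢ,uⱼ)`, one has `(−1)^r · d₀₀^(r−1) · det((dᵢⱼ)₀≤i,j≤r) ≥ 0`. -/
theorem af_determinantal_sign {V : Type*} [AddCommGroup V] [Module ℝ V] (C : Set V)
    (hC_add : ∀ u ∈ C, ∀ v ∈ C, u + v ∈ C)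
    (hC_smul : ∀ (a : ℝ), 0 ≤ a → ∀ u ∈ C, a • u ∈ C)
    (f : V → V → ℝ)
    (hsymm : ∀ u ∈ C, ∀ v ∈ C, f u v = f v u)
    (hbilin : ∀ (a₁ a₂ b₁ b₂ : ℝ), 0 ≤ a₁ → 0 ≤ a₂ → 0 ≤ b₁ → 0 ≤ b₂ →
      ∀ u₁ ∈ C, ∀ u₂ ∈ C, ∀ v₁ ∈ C, ∀ v₂ ∈ C,
        f (a₁ • u₁ + a₂ • u₂) (b₁ • v₁ + b₂ • v₂) =
          a₁ * b₁ * f u₁ v₁ + a₁ * b₂ * f u₁ v₂ + a₂ * b₁ * f u₂ v₁ + a₂ * b₂ * f u₂ v₂)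
    (hAF : ∀ u ∈ C, ∀ v ∈ C, f u u * f v v ≤ (f u v) ^ 2)
    (r : ℕ) (hr : 1 ≤ r) (u : Fin (r + 1) → V) (hu : ∀ i, u i ∈ C) :
    0 ≤ (-1 : ℝ) ^ r * (f (u 0) (u 0)) ^ (r - 1) *
        (Matrix.of fun i j : Fin (r + 1) => f (u i) (u j)).det := by
  classical
  set D : Matrix (Fin (r + 1)) (Fin (r + 1)) ℝ := Matrix.of fun i j => f (u i) (u j) with hDdef
  have hDsymm : ∀ i j, D i j = D j i := fun i j => hsymm (u i) (hu i) (u j) (hu j)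
  have h0C : (0 : V) ∈ C := by simpa using hC_smul 0 le_rfl (u 0) (hu 0)
  have hf_lin : ∀ (a b : ℝ), 0 ≤ a → 0 ≤ b → ∀ v₁ ∈ C, ∀ v₂ ∈ C, ∀ w ∈ C,
      f (a • v₁ + b • v₂) w = a * f v₁ w + b * f v₂ w := by
    intro a b ha hb v₁ hv₁ v₂ hv₂ w hw
    have := hbilin a b 1 0 ha hb zero_le_one le_rfl v₁ hv₁ v₂ hv₂ w hw w hw
    simpa using this
  have hf_zero : ∀ w ∈ C, f 0 w = 0 := by
    intro w hw
    have := hf_lin 0 0 le_rfl le_rfl w hw w hw w hw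
    simpa using this
  have hsum : ∀ (x : Fin (r + 1) → ℝ), (∀ i, 0 ≤ x i) → ∀ (s : Finset (Fin (r + 1))),
      (∑ i ∈ s, x i • u i) ∈ C ∧
        ∀ w ∈ C, f (∑ i ∈ s, x i • u i) w = ∑ i ∈ s, x i * f (u i) w := by
    intro x hx s
    induction s using Finset.induction_on with
    | empty => exact ⟨by simpa using h0C, fun w hw => by simpa using hf_zero w hw⟩
    | insert a s ha ih =>
      obtain ⟨ihm, ihf⟩ := ih
      rw [Finset.sum_insert ha]
      constructor
      · exact hC_add _ (hC_smul (x a) (hx a) _ (hu a)) _ ihm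
      · intro w hw
        have h := hf_lin (x a) 1 (hx a) zero_le_one (u a) (hu a) _ ihm w hw
        rw [one_smul] at h
        rw [h, ihf w hw, Finset.sum_insert ha, one_mul]
  have hfeq : ∀ (x y : Fin (r + 1) → ℝ), (∀ i, 0 ≤ x i) → (∀ i, 0 ≤ y i) →
      f (∑ i, x i • u i) (∑ i, y i • u i) = AFaux.bq D x y := by
    intro x y hx hy
    obtain ⟨hxm, hxf⟩ := hsum x hx Finset.univ
    obtain ⟨hym, hyf⟩ := hsum y hy Finset.univ
    rw [hxf _ hym]
    unfold AFaux.bq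
    refine Finset.sum_congr rfl fun i _ => ?_
    rw [hsymm _ (hu i) _ hym, hyf _ (hu i), Finset.mul_sum]
    refine Finset.sum_congr rfl fun j _ => ?_
    rw [hsymm _ (hu j) _ (hu i)]
    show x i * (y j * f (u i) (u j)) = x i * y j * f (u i) (u j)
    ring
  have hK : ∀ x y : Fin (r + 1) → ℝ, (∀ i, 0 ≤ x i) → (∀ i, 0 ≤ y i) →
      AFaux.bq D x x * AFaux.bq D y y ≤ (AFaux.bq D x y) ^ 2 := by
    intro x y hx hy
    rw [← hfeq x x hx hx, ← hfeq y y hy hy, ← hfeq x y hx hy]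
    exact hAF _ (hsum x hx Finset.univ).1 _ (hsum y hy Finset.univ).1
  exact AFaux.main_matrix hr D hDsymm hK
end

section
/- Let A, B, A₃, …, Aₙ be n × n complex Hermitian matrices with A, A₃, …, Aₙ positive semidefinite and B arbitrary Hermitian. Then D(A, B, A₃, …, Aₙ)² ≥ D(A, A, A₃, …, Aₙ) · D(B, B, A₃, …, Aₙ). -/
open scoped ComplexOrder

/-- The mixed discriminant of `n` complex `n × n` matrices. -/
noncomputable def mixedDisc {n : ℕ} (A : Fin n → Matrix (Fin n) (Fin n) ℂ) : ℂ :=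
  (n.factorial : ℂ)⁻¹ * ∑ σ : Equiv.Perm (Fin n), (Matrix.of fun i j => A (σ j) i j).det

namespace AFProof

open Matrix Finset Polynomial

variable {m : ℕ}

local notation "Mat" => Matrix (Fin m) (Fin m) ℂ

/-- One determinant term of the mixed discriminant. -/
noncomputable def mdTerm (A : Fin m → Mat) (σ : Equiv.Perm (Fin m)) : ℂ :=
  (Matrix.of fun i j => A (σ j) i j).det

lemma mixedDisc_eq (A : Fin m → Mat) :
    mixedDisc A = (m.factorial : ℂ)⁻¹ * ∑ σ : Equiv.Perm (Fin m), mdTerm A σ := rfl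

lemma mixedDisc_comp_perm (A : Fin m → Mat) (τ : Equiv.Perm (Fin m)) :
    mixedDisc (A ∘ τ) = mixedDisc A := by
  rw [mixedDisc_eq, mixedDisc_eq]
  congr 1
  refine Fintype.sum_bijective (fun σ => τ * σ) (Group.mulLeft_bijective τ) _ _ (fun σ => ?_)
  unfold mdTerm
  congr 1

lemma mixedDisc_const (M : Mat) : mixedDisc (fun _ : Fin m => M) = M.det := by
  rw [mixedDisc_eq]
  have : ∀ σ : Equiv.Perm (Fin m), mdTerm (fun _ : Fin m => M) σ = M.det := by
    intro σ; unfold mdTerm; congr 1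
  rw [Finset.sum_congr rfl (fun σ _ => this σ), Finset.sum_const]
  simp [Finset.card_univ, Fintype.card_perm, Fintype.card_fin]
  rw [← mul_assoc, inv_mul_cancel₀ (by exact_mod_cast Nat.factorial_ne_zero m), one_mul]

lemma mdTerm_update (A : Fin m → Mat) (σ : Equiv.Perm (Fin m)) (i₀ : Fin m) (X : Mat) :
    mdTerm (Function.update A i₀ X) σ =
      ((Matrix.of fun i j => A (σ j) i j).updateCol (σ⁻¹ i₀) fun i => X i (σ⁻¹ i₀)).det := by
  unfold mdTerm
  congr 1
  ext i j
  rw [Matrix.updateCol_apply]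
  by_cases h : j = σ⁻¹ i₀
  · subst h
    simp [Function.update_apply]
  · have h' : σ j ≠ i₀ := fun hc => h (by simp [← hc])
    simp [Function.update_apply, h', h]
    exact fun hj => absurd hj h

lemma mixedDisc_update_add (A : Fin m → Mat) (i₀ : Fin m) (X Y : Mat) :
    mixedDisc (Function.update A i₀ (X + Y)) =
      mixedDisc (Function.update A i₀ X) + mixedDisc (Function.update A i₀ Y) := by
  rw [mixedDisc_eq, mixedDisc_eq, mixedDisc_eq, ← mul_add, ← Finset.sum_add_distrib]
  congr 1
  refine Finset.sum_congr rfl fun σ _ => ?_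
  rw [mdTerm_update, mdTerm_update, mdTerm_update]
  have : (fun i => (X + Y) i (σ⁻¹ i₀)) = (fun i => X i (σ⁻¹ i₀)) + fun i => Y i (σ⁻¹ i₀) := rfl
  rw [this, Matrix.det_updateCol_add]

lemma mixedDisc_update_smul (A : Fin m → Mat) (i₀ : Fin m) (c : ℂ) (X : Mat) :
    mixedDisc (Function.update A i₀ (c • X)) = c * mixedDisc (Function.update A i₀ X) := by
  rw [mixedDisc_eq, mixedDisc_eq, Finset.mul_sum, Finset.mul_sum, Finset.mul_sum]
  refine Finset.sum_congr rfl fun σ _ => ?_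
  rw [← mul_assoc, mul_comm c ((m.factorial : ℂ)⁻¹), mul_assoc]
  congr 1
  rw [mdTerm_update, mdTerm_update]
  have : (fun i => (c • X) i (σ⁻¹ i₀)) = c • fun i => X i (σ⁻¹ i₀) := rfl
  rw [this, Matrix.det_updateCol_smul]


lemma mixedDisc_congr {A B : Fin m → Mat} (h : ∀ i, A i = B i) : mixedDisc A = mixedDisc B :=
  congrArg _ (funext h)

lemma mixedDisc_expand (S : Finset (Fin m)) :
    ∀ (A : Fin m → Mat) (U W : Mat),
    mixedDisc (fun i => if i ∈ S then U + W else A i)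
      = ∑ T ∈ S.powerset, mixedDisc (fun i => if i ∈ T then W else if i ∈ S then U else A i) := by
  classical
  induction S using Finset.induction_on with
  | empty =>
      intro A U W
      simp only [Finset.powerset_empty, Finset.sum_singleton, Finset.notMem_empty, if_false]
  | @insert a s ha ih =>
      intro A U W
      have h1 : (fun i => if i ∈ insert a s then U + W else A i)
          = Function.update (fun i => if i ∈ s then U + W else A i) a (U + W) := by
        funext i
        rcases eq_or_ne i a with rfl | hi
        · simp [Function.update_self, Finset.mem_insert]
        · simp [Function.update_of_ne hi, Finset.mem_insert, hi]
      have h2 : Function.update (fun i => if i ∈ s then U + W else A i) a U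
          = fun i => if i ∈ s then U + W else (Function.update A a U) i := by
        funext i
        rcases eq_or_ne i a with rfl | hi
        · simp [Function.update_self, ha]
        · simp [Function.update_of_ne hi]
      have h3 : Function.update (fun i => if i ∈ s then U + W else A i) a W
          = fun i => if i ∈ s then U + W else (Function.update A a W) i := by
        funext i
        rcases eq_or_ne i a with rfl | hi
        · simp [Function.update_self, ha]
        · simp [Function.update_of_ne hi]
      rw [h1, mixedDisc_update_add, h2, h3, ih, ih, Finset.sum_powerset_insert ha]
      congr 1
      · refine Finset.sum_congr rfl fun T hT => ?_
        have haT : a ∉ T := fun hc => ha (Finset.mem_powerset.mp hT hc)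
        refine mixedDisc_congr fun i => ?_
        rcases eq_or_ne i a with rfl | hi
        · simp [haT, ha, Function.update_self, Finset.mem_insert]
        · simp [Function.update_of_ne hi, Finset.mem_insert, hi]
      · refine Finset.sum_congr rfl fun T hT => ?_
        have haT : a ∉ T := fun hc => ha (Finset.mem_powerset.mp hT hc)
        refine mixedDisc_congr fun i => ?_
        rcases eq_or_ne i a with rfl | hi
        · simp [haT, ha, Function.update_self, Finset.mem_insert]
        · simp [Function.update_of_ne hi, Finset.mem_insert, hi]

lemma mixedDisc_smul_set (T : Finset (Fin m)) :
    ∀ (g : Fin m → Mat) (c : ℂ) (W : Mat),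
    mixedDisc (fun i => if i ∈ T then c • W else g i)
      = c ^ T.card * mixedDisc (fun i => if i ∈ T then W else g i) := by
  classical
  induction T using Finset.induction_on with
  | empty => intro g c W; simp
  | @insert a s ha ih =>
      intro g c W
      have h1 : (fun i => if i ∈ insert a s then c • W else g i)
          = Function.update (fun i => if i ∈ s then c • W else g i) a (c • W) := by
        funext i
        rcases eq_or_ne i a with rfl | hi
        · simp [Function.update_self, Finset.mem_insert]
        · simp [Function.update_of_ne hi, Finset.mem_insert, hi]
      have h2 : Function.update (fun i => if i ∈ s then c • W else g i) a W
          = fun i => if i ∈ s then c • W else (Function.update g a W) i := by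
        funext i
        rcases eq_or_ne i a with rfl | hi
        · simp [Function.update_self, ha]
        · simp [Function.update_of_ne hi]
      have h4 : (fun i => if i ∈ s then W else (Function.update g a W) i)
          = fun i => if i ∈ insert a s then W else g i := by
        funext i
        rcases eq_or_ne i a with rfl | hi
        · simp [ha, Function.update_self, Finset.mem_insert]
        · simp [Function.update_of_ne hi, Finset.mem_insert, hi]
      rw [h1, mixedDisc_update_smul, h2, ih, h4, Finset.card_insert_of_notMem ha, pow_succ,
        ← mul_assoc, mul_comm (c ^ s.card) c]


lemma sum_det_row_eq (B : Fin m → Mat) :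
    ∑ σ : Equiv.Perm (Fin m), (Matrix.of fun i j => B (σ i) i j).det
      = ∑ σ : Equiv.Perm (Fin m), (Matrix.of fun i j => B (σ j) i j).det := by
  have lhs : ∀ σ : Equiv.Perm (Fin m), (Matrix.of fun i j => B (σ i) i j).det
      = ∑ π : Equiv.Perm (Fin m), Equiv.Perm.sign π • ∏ i, B (σ (π i)) (π i) i := by
    intro σ; rw [Matrix.det_apply]; rfl
  have rhs : ∀ σ : Equiv.Perm (Fin m), (Matrix.of fun i j => B (σ j) i j).det
      = ∑ π : Equiv.Perm (Fin m), Equiv.Perm.sign π • ∏ i, B (σ i) (π i) i := by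
    intro σ; rw [Matrix.det_apply]; rfl
  simp only [lhs, rhs]
  rw [Finset.sum_comm]
  have inner : ∀ π : Equiv.Perm (Fin m),
      ∑ σ : Equiv.Perm (Fin m), Equiv.Perm.sign π • ∏ i, B (σ (π i)) (π i) i
        = ∑ σ : Equiv.Perm (Fin m), Equiv.Perm.sign π • ∏ i, B (σ i) (π i) i := by
    intro π
    have := Equiv.sum_comp (Equiv.mulRight π)
      (fun τ : Equiv.Perm (Fin m) => Equiv.Perm.sign π • ∏ i, B (τ i) (π i) i)
    rw [← this]
    refine Finset.sum_congr rfl fun σ _ => ?_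
    congr 1
  rw [Finset.sum_congr rfl fun π _ => inner π, Finset.sum_comm]

lemma star_mixedDisc (A : Fin m → Mat) :
    star (mixedDisc A) = mixedDisc (fun i => (A i)ᴴ) := by
  rw [mixedDisc_eq, mixedDisc_eq, star_mul', star_inv₀, star_natCast]
  congr 1
  rw [star_sum]
  have : ∀ σ : Equiv.Perm (Fin m), star (mdTerm A σ)
      = (Matrix.of fun i j => (A (σ i))ᴴ i j).det := by
    intro σ
    unfold mdTerm
    rw [← Matrix.det_conjTranspose]
    congr 1
  rw [Finset.sum_congr rfl fun σ _ => this σ]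
  exact sum_det_row_eq (fun k => (A k)ᴴ)

lemma mixedDisc_real {A : Fin m → Mat} (h : ∀ i, (A i).IsHermitian) :
    (mixedDisc A).im = 0 := by
  have := star_mixedDisc A
  have h2 : (fun i => (A i)ᴴ) = A := funext fun i => h i
  rw [h2] at this
  have h3 := congrArg Complex.im this
  simp only [Complex.star_def, Complex.conj_im] at h3
  linarith


lemma key_ratio (R : Multiset ℂ) : ∀ (hR : ∀ r ∈ R, r.im < 0) (c : ℂ) (_ : c ≠ 0),
    (Polynomial.C c * (R.map (fun r => X - Polynomial.C r)).prod).eval 0 ≠ 0 ∧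
    (((Polynomial.C c * (R.map (fun r => X - Polynomial.C r)).prod).derivative.eval 0) /
      ((Polynomial.C c * (R.map (fun r => X - Polynomial.C r)).prod).eval 0)).im ≤ 0 ∧
    (R ≠ 0 → (((Polynomial.C c * (R.map (fun r => X - Polynomial.C r)).prod).derivative.eval 0) /
      ((Polynomial.C c * (R.map (fun r => X - Polynomial.C r)).prod).eval 0)).im < 0) := by
  induction R using Multiset.induction_on with
  | empty =>
      intro hR c hc
      simp [hc]
  | @cons r R ih =>
      intro hR c hc
      have hr : r.im < 0 := hR r (Multiset.mem_cons_self r R)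
      have hr0 : r ≠ 0 := fun hc' => by simp [hc'] at hr
      have hR' : ∀ x ∈ R, x.im < 0 := fun x hx => hR x (Multiset.mem_cons_of_mem hx)
      obtain ⟨h0, hle, _⟩ := ih hR' c hc
      set q' : Polynomial ℂ := Polynomial.C c * (R.map (fun r => X - Polynomial.C r)).prod with hq'
      have hfact : Polynomial.C c * ((r ::ₘ R).map (fun r => X - Polynomial.C r)).prod
          = (X - Polynomial.C r) * q' := by
        rw [Multiset.map_cons, Multiset.prod_cons, hq']; ring
      rw [hfact]
      have heval : ((X - Polynomial.C r) * q').eval 0 = (-r) * q'.eval 0 := by simp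
      have hder : ((X - Polynomial.C r) * q').derivative.eval 0
          = q'.eval 0 + (-r) * q'.derivative.eval 0 := by
        rw [derivative_mul]
        simp
      have hne : ((X - Polynomial.C r) * q').eval 0 ≠ 0 := by
        rw [heval]; exact mul_ne_zero (neg_ne_zero.mpr hr0) h0
      refine ⟨hne, ?_, fun _ => ?_⟩ <;>
      · have hratio : ((X - Polynomial.C r) * q').derivative.eval 0
            / ((X - Polynomial.C r) * q').eval 0
            = (-r)⁻¹ + q'.derivative.eval 0 / q'.eval 0 := by
          rw [hder, heval, inv_eq_one_div,
            div_add_div _ _ (neg_ne_zero.mpr hr0) h0, one_mul]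
        have him : ((-r)⁻¹).im < 0 := by
          rw [Complex.inv_im]
          have : (0:ℝ) < Complex.normSq (-r) := by
            rw [Complex.normSq_pos]; exact neg_ne_zero.mpr hr0
          apply div_neg_of_neg_of_pos _ this
          simp [hr]
        rw [hratio, Complex.add_im]
        linarith

lemma derivative_ne_zero_of_uhp (p : Polynomial ℂ) (hdeg : 1 ≤ p.natDegree)
    (h : ∀ s : ℂ, 0 ≤ s.im → p.eval s ≠ 0) : p.derivative.eval 0 ≠ 0 := by
  have hp0 : p ≠ 0 := by
    intro hc; rw [hc] at hdeg; simp at hdeg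
  have hsplit : p.roots.card = p.natDegree :=
    (Polynomial.splits_iff_card_roots).mp (IsAlgClosed.splits p)
  have hfact := Polynomial.C_leadingCoeff_mul_prod_multiset_X_sub_C hsplit
  have hR : ∀ r ∈ p.roots, r.im < 0 := by
    intro r hr
    by_contra hge
    push_neg at hge
    exact h r hge (Polynomial.isRoot_of_mem_roots hr)
  have hRne : p.roots ≠ 0 := by
    intro hc
    rw [hc] at hsplit; simp at hsplit; omega
  obtain ⟨h0, _, hlt⟩ := key_ratio p.roots hR p.leadingCoeff
    (Polynomial.leadingCoeff_ne_zero.mpr hp0)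
  rw [hfact] at h0 hlt
  have hlt' := hlt hRne
  intro hc
  rw [hc] at hlt'
  simp at hlt'

lemma herm_smul_real {A : Mat} (hA : A.IsHermitian) (r : ℝ) : ((r : ℂ) • A).IsHermitian := by
  unfold Matrix.IsHermitian
  rw [Matrix.conjTranspose_smul, hA]
  congr 1
  simp [Complex.star_def, Complex.conj_ofReal]

lemma psd_smul_real {A : Mat} (hA : A.PosSemidef) {r : ℝ} (hr : 0 ≤ r) :
    ((r : ℂ) • A).PosSemidef := by
  refine Matrix.PosSemidef.of_dotProduct_mulVec_nonneg (herm_smul_real hA.1 r) fun x => ?_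
  rw [Matrix.smul_mulVec, dotProduct_smul, smul_eq_mul]
  exact mul_nonneg (by exact_mod_cast Complex.real_le_real.mpr hr) (hA.dotProduct_mulVec_nonneg x)

lemma pd_smul_real {A : Mat} (hA : A.PosDef) {r : ℝ} (hr : 0 < r) :
    ((r : ℂ) • A).PosDef := by
  refine Matrix.PosDef.of_dotProduct_mulVec_pos (herm_smul_real hA.1 r) fun x hx => ?_
  rw [Matrix.smul_mulVec, dotProduct_smul, smul_eq_mul]
  have := hA.dotProduct_mulVec_pos hx
  have hr' : (0:ℂ) < (r:ℂ) := by exact_mod_cast Complex.real_lt_real.mpr hr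
  exact mul_pos hr' this

lemma herm_dot_real {H : Mat} (hH : H.IsHermitian) (v : Fin m → ℂ) :
    (star v ⬝ᵥ (H *ᵥ v)).im = 0 := by
  have h1 : star (star v ⬝ᵥ (H *ᵥ v)) = star v ⬝ᵥ (H *ᵥ v) := by
    rw [← Matrix.star_dotProduct_star]
    rw [star_star, Matrix.star_mulVec]
    rw [Matrix.dotProduct_mulVec, hH]
  have := congrArg Complex.im h1
  simp only [Complex.star_def, Complex.conj_im] at this
  linarith

lemma det_herm_add_I_pd {H P : Mat} (hH : H.IsHermitian) (hP : P.PosDef) :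
    (H + Complex.I • P).det ≠ 0 := by
  intro hdet
  obtain ⟨v, hv, hmv⟩ := (Matrix.exists_mulVec_eq_zero_iff).mpr hdet
  have h1 : star v ⬝ᵥ ((H + Complex.I • P) *ᵥ v) = 0 := by rw [hmv, dotProduct_zero]
  rw [Matrix.add_mulVec, dotProduct_add, Matrix.smul_mulVec,
    dotProduct_smul] at h1
  have hPpos : 0 < star v ⬝ᵥ (P *ᵥ v) := hP.dotProduct_mulVec_pos hv
  have hPre : 0 < (star v ⬝ᵥ (P *ᵥ v)).re ∧ (star v ⬝ᵥ (P *ᵥ v)).im = 0 := by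
    rw [Complex.lt_def] at hPpos
    exact ⟨by simpa using hPpos.1, by simpa using hPpos.2.symm⟩
  have him := congrArg Complex.im h1
  rw [Complex.add_im] at him
  rw [smul_eq_mul, Complex.mul_im] at him
  simp only [Complex.I_re, Complex.I_im, herm_dot_real hH v, hPre.2] at him
  simp only [Complex.zero_im] at him
  have : (star v ⬝ᵥ (P *ᵥ v)).re = 0 := by linarith [him]
  linarith [hPre.1]

theorem ST (V : Fin m → Mat) (hV : ∀ i, (V i).PosDef) :
    ∀ (j : ℕ) (S : Finset (Fin m)), S.Nonempty → S.card + j = m →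
    ∀ (H P : Mat), H.IsHermitian → P.PosDef →
    mixedDisc (fun i => if i ∈ S then H + Complex.I • P else V i) ≠ 0 := by
  intro j
  induction j with
  | zero =>
      intro S _ hcard H P hH hP
      have hS : S = Finset.univ :=
        (Finset.card_eq_iff_eq_univ S).mp (by rw [Fintype.card_fin]; omega)
      subst hS
      have : (fun i : Fin m => if i ∈ Finset.univ then H + Complex.I • P else V i)
          = fun _ : Fin m => H + Complex.I • P := by
        funext i; simp
      rw [this, mixedDisc_const]
      exact det_herm_add_I_pd hH hP
  | succ j ih =>
      intro S hSne hcard H P hH hP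
      have hSlt : S.card < m := by omega
      have hex : ∃ a, a ∉ S := by
        by_contra hcon
        push_neg at hcon
        have : S = Finset.univ := Finset.eq_univ_iff_forall.mpr hcon
        rw [this, Finset.card_univ, Fintype.card_fin] at hSlt
        omega
      obtain ⟨a, ha⟩ := hex
      set S' := insert a S with hS'
      have hS'card : S'.card + j = m := by
        rw [hS', Finset.card_insert_of_notMem ha]; omega
      have hS'ne : S'.Nonempty := ⟨a, Finset.mem_insert_self a S⟩
      set MM := H + Complex.I • P with hMM
      set d : Finset (Fin m) → ℂ :=
        fun T => mixedDisc (fun i => if i ∈ T then V a else if i ∈ S' then MM else V i) with hd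
      set p : Polynomial ℂ :=
        ∑ T ∈ S'.powerset, Polynomial.C (d T) * Polynomial.X ^ T.card with hp
      -- evaluation of p
      have heval : ∀ s : ℂ,
          p.eval s = mixedDisc (fun i => if i ∈ S' then MM + s • V a else V i) := by
        intro s
        rw [mixedDisc_expand S' V MM (s • V a), hp, Polynomial.eval_finset_sum]
        refine Finset.sum_congr rfl fun T hT => ?_
        rw [Polynomial.eval_mul, Polynomial.eval_C, Polynomial.eval_pow, Polynomial.eval_X,
          mixedDisc_smul_set T (fun i => if i ∈ S' then MM else V i) s (V a), hd]
        ring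
      -- coefficients of p
      have hcoeff : ∀ k, p.coeff k
          = ∑ T ∈ S'.powerset, if T.card = k then d T else 0 := by
        intro k
        rw [hp, Polynomial.finset_sum_coeff]
        refine Finset.sum_congr rfl fun T _ => ?_
        rw [Polynomial.coeff_C_mul, Polynomial.coeff_X_pow]
        by_cases h : T.card = k
        · simp [h]
        · simp [h, Ne.symm h]
      -- top coefficient
      have htop : p.coeff S'.card = d S' := by
        rw [hcoeff]
        rw [Finset.sum_eq_single S']
        · simp
        · intro T hT hTne
          have hsub := Finset.mem_powerset.mp hT
          by_cases h : T.card = S'.card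
          · exact absurd (Finset.eq_of_subset_of_card_le hsub (le_of_eq h.symm)) hTne
          · simp [h]
        · intro hc
          exact absurd (Finset.mem_powerset.mpr (Finset.Subset.refl S')) hc
      -- d S' ≠ 0
      have hdS' : d S' ≠ 0 := by
        have harr : (fun i => if i ∈ S' then V a else if i ∈ S' then MM else V i)
            = fun i => if i ∈ S' then V a else V i := by
          funext i; by_cases h : i ∈ S' <;> simp [h]
        have hhom := mixedDisc_smul_set S' V Complex.I (V a)
        have hih := ih S' hS'ne hS'card 0 (V a) (Matrix.isHermitian_zero) (hV a)
        have hz : (fun i => if i ∈ S' then (0:Mat) + Complex.I • V a else V i)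
            = fun i => if i ∈ S' then Complex.I • V a else V i := by
          funext i; rw [zero_add]
        rw [hz] at hih
        rw [hhom] at hih
        have hI : (Complex.I : ℂ) ^ S'.card ≠ 0 := pow_ne_zero _ Complex.I_ne_zero
        simp only [hd]
        rw [harr]
        exact fun hc => hih (by rw [hc, mul_zero])
      -- natDegree of p
      have hdeg_le : p.natDegree ≤ S'.card := by
        rw [hp]
        refine Polynomial.natDegree_sum_le_of_forall_le _ _ fun T hT => ?_
        refine le_trans (Polynomial.natDegree_C_mul_le _ _) ?_
        rw [Polynomial.natDegree_X_pow]
        exact Finset.card_le_card (Finset.mem_powerset.mp hT)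
      have hdeg_ge : S'.card ≤ p.natDegree :=
        Polynomial.le_natDegree_of_ne_zero (htop ▸ hdS')
      have hdeg : 1 ≤ p.natDegree := by
        have : 1 ≤ S'.card := Finset.card_pos.mpr hS'ne
        omega
      -- nonvanishing on closed upper half plane
      have huhp : ∀ s : ℂ, 0 ≤ s.im → p.eval s ≠ 0 := by
        intro s hs
        rw [heval s]
        have hdecomp : MM + s • V a
            = (H + (s.re : ℂ) • V a) + Complex.I • (P + (s.im : ℂ) • V a) := by
          rw [hMM]
          have h5 : ((s.re : ℂ)) • V a + ((s.im : ℂ) * Complex.I) • V a = s • V a := by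
            rw [← add_smul, Complex.re_add_im]
          rw [smul_add]
          have h6 : Complex.I • ((s.im : ℂ) • V a) = ((s.im : ℂ) * Complex.I) • V a := by
            rw [smul_smul, mul_comm]
          rw [h6, ← h5]
          abel
        rw [hdecomp]
        exact ih S' hS'ne hS'card _ _ (hH.add (herm_smul_real (hV a).1 s.re))
          (hP.add_posSemidef (psd_smul_real (hV a).posSemidef hs))
      -- derivative at 0 is nonzero
      have hder := derivative_ne_zero_of_uhp p hdeg huhp
      have hder_eq : p.derivative.eval 0 = p.coeff 1 := by
        rw [← Polynomial.coeff_zero_eq_eval_zero, Polynomial.coeff_derivative]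
        simp
      -- coefficient 1 as a sum over singletons
      have hsingle : ∀ b ∈ S', d {b} = d {a} := by
        intro b hb
        rcases eq_or_ne b a with rfl | hba
        · rfl
        · have hswap := mixedDisc_comp_perm
            (fun i => if i ∈ ({a} : Finset (Fin m)) then V a else if i ∈ S' then MM else V i)
            (Equiv.swap a b)
          simp only [hd]
          rw [← hswap]
          refine mixedDisc_congr fun i => ?_
          simp only [Function.comp_apply, Finset.mem_singleton]
          rcases eq_or_ne i b with rfl | hib
          · rw [Equiv.swap_apply_right]
            simp [hb]
          · by_cases hia : i = a
            · rw [hia, Equiv.swap_apply_left]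
              have hbS' : b ∈ S' := hb
              have haS' : a ∈ S' := Finset.mem_insert_self a S
              simp [hba, Ne.symm hba, hbS', haS']
            · rw [Equiv.swap_apply_of_ne_of_ne hia hib]
              simp [hia, hib]
      have hcoeff1 : p.coeff 1 = (S'.card : ℂ) * d {a} := by
        rw [hcoeff 1]
        rw [← Finset.sum_filter]
        have hfilter : S'.powerset.filter (fun T => T.card = 1) = S'.powersetCard 1 := by
          rw [Finset.powersetCard_eq_filter]
        rw [hfilter, Finset.powersetCard_one, Finset.sum_map]
        simp only [Function.Embedding.coeFn_mk]
        rw [Finset.sum_congr rfl fun b hb => hsingle b hb, Finset.sum_const, nsmul_eq_mul]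
      have hda : d {a} ≠ 0 := by
        intro hc
        rw [hder_eq, hcoeff1, hc, mul_zero] at hder
        exact hder rfl
      -- d {a} is the goal
      have hfinal : d {a} = mixedDisc (fun i => if i ∈ S then MM else V i) := by
        simp only [hd]
        refine mixedDisc_congr fun i => ?_
        simp only [Finset.mem_singleton]
        rcases eq_or_ne i a with rfl | hia
        · simp [ha]
        · have : i ∈ S' ↔ i ∈ S := by
            rw [hS', Finset.mem_insert]
            exact ⟨fun h => h.resolve_left hia, Or.inr⟩
          simp [hia, this]
      rw [← hfinal]
      exact hda

/-- AF inequality with a positive-definite anchor. -/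
theorem quad_ineq (n : ℕ) (V : Fin (n+2) → Matrix (Fin (n+2)) (Fin (n+2)) ℂ)
    (hV : ∀ i, (V i).PosDef) (X E : Matrix (Fin (n+2)) (Fin (n+2)) ℂ)
    (hX : X.IsHermitian) (hE : E.PosDef) :
    (mixedDisc (fun i => if i ∈ ({1} : Finset (Fin (n+2))) then E
        else if i ∈ ({0,1} : Finset (Fin (n+2))) then X else V i)).re ^ 2
      ≥ (mixedDisc (fun i => if i ∈ ({0,1} : Finset (Fin (n+2))) then X else V i)).re
        * (mixedDisc (fun i => if i ∈ ({0,1} : Finset (Fin (n+2))) then E else V i)).re := by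
  classical
  have h01 : (0 : Fin (n+2)) ≠ 1 := by simp [Fin.ext_iff]
  set S₀ : Finset (Fin (n+2)) := {0, 1} with hS₀
  have hS₀card : S₀.card = 2 := by
    rw [hS₀, Finset.card_insert_of_notMem (by simp [h01]), Finset.card_singleton]
  -- the three coefficients
  set dd : Finset (Fin (n+2)) → ℂ :=
    fun T => mixedDisc (fun i => if i ∈ T then E else if i ∈ S₀ then X else V i) with hdd
  -- φ(t) as a function
  have hexpand : ∀ t : ℂ,
      mixedDisc (fun i => if i ∈ S₀ then X + t • E else V i)
        = dd ∅ + t * (dd {0} + dd {1}) + t^2 * dd S₀ := by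
    intro t
    rw [mixedDisc_expand S₀ V X (t • E)]
    have hps : ({1} : Finset (Fin (n+2))).powerset = {∅, {1}} := by
      rw [show ({1} : Finset (Fin (n+2))) = insert 1 ∅ from rfl, Finset.powerset_insert,
        Finset.powerset_empty, Finset.image_singleton]
      rfl
    rw [show S₀ = insert 0 {1} from rfl,
      Finset.sum_powerset_insert (show (0:Fin (n+2)) ∉ ({1}:Finset _) by simp [h01]), hps,
      Finset.sum_insert (by simpa using (Finset.singleton_ne_empty (1 : Fin (n+2))).symm),
      Finset.sum_singleton,
      Finset.sum_insert (by simpa using (Finset.singleton_ne_empty (1 : Fin (n+2))).symm),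
      Finset.sum_singleton]
    have hstep : ∀ T : Finset (Fin (n+2)),
        mixedDisc (fun i => if i ∈ T then t • E else if i ∈ S₀ then X else V i)
          = t ^ T.card * dd T := fun T => mixedDisc_smul_set T _ t E
    rw [hstep ∅, hstep {1}, hstep (insert 0 ∅), hstep (insert 0 {1})]
    have c0 : Finset.card (∅ : Finset (Fin (n+2))) = 0 := rfl
    have c1 : Finset.card ({1} : Finset (Fin (n+2))) = 1 := rfl
    have c2 : Finset.card (insert (0:Fin (n+2)) (∅ : Finset (Fin (n+2)))) = 1 := rfl
    have c3 : Finset.card (insert (0:Fin (n+2)) ({1} : Finset (Fin (n+2)))) = 2 := by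
      rw [Finset.card_insert_of_notMem (by simp [h01]), Finset.card_singleton]
    have e0 : dd (insert (0:Fin (n+2)) (∅ : Finset (Fin (n+2)))) = dd {0} := rfl
    have e1 : dd (insert (0:Fin (n+2)) ({1} : Finset (Fin (n+2)))) = dd S₀ := rfl
    rw [c0, c1, c2, c3, e0, e1]
    ring
  -- all slot matrices Hermitian
  have hVh : ∀ i, (V i).IsHermitian := fun i => (hV i).1
  have harrherm : ∀ T : Finset (Fin (n+2)), ∀ i,
      ((fun i => if i ∈ T then E else if i ∈ S₀ then X else V i) i).IsHermitian := by
    intro T i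
    by_cases h1 : i ∈ T
    · simpa [h1] using hE.1
    · by_cases h2 : i ∈ S₀ <;> simp [h1, h2, hX, hVh i]
  have hddreal : ∀ T : Finset (Fin (n+2)), (dd T).im = 0 := by
    intro T
    exact mixedDisc_real (harrherm T)
  -- d{0} = d{1}
  have hd01 : dd {0} = dd {1} := by
    have hswap := mixedDisc_comp_perm
      (fun i => if i ∈ ({1} : Finset (Fin (n+2))) then E else if i ∈ S₀ then X else V i)
      (Equiv.swap 0 1)
    simp only [hdd]
    rw [← hswap]
    refine mixedDisc_congr fun i => ?_
    simp only [Function.comp_apply, Finset.mem_singleton]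
    rcases eq_or_ne i 0 with rfl | hi0
    · rw [Equiv.swap_apply_left]
      simp [h01]
    · rcases eq_or_ne i 1 with rfl | hi1
      · rw [Equiv.swap_apply_right]
        simp [h01.symm, hS₀]
      · rw [Equiv.swap_apply_of_ne_of_ne hi0 hi1]
        simp [hi0, hi1]
  -- nonvanishing of the quadratic off the real axis
  have hup : ∀ t : ℂ, 0 < t.im →
      mixedDisc (fun i => if i ∈ S₀ then X + t • E else V i) ≠ 0 := by
    intro t ht
    have hdecomp : X + t • E
        = (X + (t.re : ℂ) • E) + Complex.I • ((t.im : ℂ) • E) := by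
      have h5 : ((t.re : ℂ)) • E + ((t.im : ℂ) * Complex.I) • E = t • E := by
        rw [← add_smul, Complex.re_add_im]
      have h6 : Complex.I • ((t.im : ℂ) • E) = ((t.im : ℂ) * Complex.I) • E := by
        rw [smul_smul, mul_comm]
      rw [h6, ← h5]
      abel
    rw [hdecomp]
    exact ST V hV n S₀ ⟨0, Finset.mem_insert_self 0 {1}⟩ (by rw [hS₀card]; omega) _ _
      (hX.add (herm_smul_real hE.1 t.re)) (pd_smul_real hE ht)
  have hnv : ∀ t : ℂ, t.im ≠ 0 →
      mixedDisc (fun i => if i ∈ S₀ then X + t • E else V i) ≠ 0 := by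
    intro t ht
    rcases ht.lt_or_gt with hlt | hgt
    · -- lower half plane: use conjugation
      have hconj : star (mixedDisc (fun i => if i ∈ S₀ then X + t • E else V i))
          = mixedDisc (fun i => if i ∈ S₀ then X + (star t) • E else V i) := by
        rw [star_mixedDisc]
        refine mixedDisc_congr fun i => ?_
        by_cases h : i ∈ S₀
        · simp only [h, if_true]
          rw [Matrix.conjTranspose_add, Matrix.conjTranspose_smul, hX, hE.1]
        · simp only [h, if_false]
          exact hVh i
      have hst : 0 < (star t).im := by
        simp only [Complex.star_def, Complex.conj_im]
        linarith
      intro hc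
      have := hup (star t) hst
      rw [← hconj] at this
      exact this (by rw [hc, star_zero])
    · exact hup t hgt
  -- now the discriminant argument
  by_contra hcon
  push_neg at hcon
  have hdde : dd ∅ = mixedDisc (fun i => if i ∈ S₀ then X else V i) :=
    mixedDisc_congr (by intro i; simp)
  have hddS : dd S₀ = mixedDisc (fun i => if i ∈ S₀ then E else V i) :=
    mixedDisc_congr (by intro i; by_cases h : i ∈ S₀ <;> simp [h])
  set u' := (dd ∅).re with hu'
  set v' := (dd S₀).re with hv'
  set w' := (dd {1}).re with hw'
  have hcon' : w' ^ 2 < u' * v' := by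
    rw [hu', hv', hw', hdde, hddS]
    exact hcon
  have hs2 : 0 < u' * v' - w' ^ 2 := by linarith
  have hv'ne : v' ≠ 0 := by
    intro hc
    rw [hc] at hs2
    nlinarith [sq_nonneg w']
  set s := Real.sqrt (u' * v' - w' ^ 2) with hs
  have hssq : s ^ 2 = u' * v' - w' ^ 2 := Real.sq_sqrt hs2.le
  have hspos : 0 < s := Real.sqrt_pos.mpr hs2
  set t₀ : ℂ := (-(w' : ℂ) + (s : ℂ) * Complex.I) / (v' : ℂ) with ht₀
  have him : t₀.im = s / v' := by
    rw [ht₀, Complex.div_ofReal_im]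
    simp
  have himne : t₀.im ≠ 0 := by
    rw [him]
    exact div_ne_zero (ne_of_gt hspos) hv'ne
  -- complex casts of the coefficients
  have hu : dd ∅ = ((u' : ℝ) : ℂ) := Complex.ext rfl (hddreal ∅)
  have hv : dd S₀ = ((v' : ℝ) : ℂ) := Complex.ext rfl (hddreal S₀)
  have hw : dd {1} = ((w' : ℝ) : ℂ) := Complex.ext rfl (hddreal {1})
  have hv'c : ((v' : ℝ) : ℂ) ≠ 0 := Complex.ofReal_ne_zero.mpr hv'ne
  have hsc : ((s : ℝ) : ℂ) ^ 2 = ((u' : ℝ) : ℂ) * ((v' : ℝ) : ℂ) - ((w' : ℝ) : ℂ) ^ 2 := by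
    exact_mod_cast congrArg (fun x : ℝ => (x : ℂ)) hssq
  have hvt : ((v' : ℝ) : ℂ) * t₀ = -(w' : ℂ) + (s : ℂ) * Complex.I := by
    rw [ht₀]
    field_simp
  have hval : mixedDisc (fun i => if i ∈ S₀ then X + t₀ • E else V i) = 0 := by
    rw [hexpand t₀, ← hd01, hd01, hu, hv, hw]
    have key : ((v' : ℝ) : ℂ) * (((u' : ℝ) : ℂ) + t₀ * (((w' : ℝ) : ℂ) + ((w' : ℝ) : ℂ))
        + t₀ ^ 2 * ((v' : ℝ) : ℂ)) = 0 := by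
      have expand2 : ((v' : ℝ) : ℂ) * (((u' : ℝ) : ℂ) + t₀ * (((w' : ℝ) : ℂ) + ((w' : ℝ) : ℂ))
          + t₀ ^ 2 * ((v' : ℝ) : ℂ))
          = ((u' : ℝ) : ℂ) * ((v' : ℝ) : ℂ)
            + (((v' : ℝ) : ℂ) * t₀) * (2 * ((w' : ℝ) : ℂ))
            + (((v' : ℝ) : ℂ) * t₀) ^ 2 := by ring
      rw [expand2, hvt]
      linear_combination ((s : ℝ) : ℂ) ^ 2 * Complex.I_sq - hsc
    rcases mul_eq_zero.mp key with h | h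
    · exact absurd h hv'c
    · exact h
  exact hnv t₀ himne hval

section assembly
variable {n : ℕ}
local notation "MatN" => Matrix (Fin (n+2)) (Fin (n+2)) ℂ

lemma succsucc_ne_zero (k : Fin n) : (Fin.succ (Fin.succ k) : Fin (n+2)) ≠ 0 :=
  Fin.succ_ne_zero _

lemma succsucc_ne_one (k : Fin n) : (Fin.succ (Fin.succ k) : Fin (n+2)) ≠ 1 := by
  rw [← Fin.succ_zero_eq_one]
  intro hc
  exact Fin.succ_ne_zero k (Fin.succ_inj.mp hc)

lemma mem01_zero : (0 : Fin (n+2)) ∈ ({0,1} : Finset (Fin (n+2))) := by simp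
lemma mem01_one : (1 : Fin (n+2)) ∈ ({0,1} : Finset (Fin (n+2))) := by simp

lemma ifform_eq_cons (W Y Z : MatN) (R : Fin n → MatN) :
    (fun i => if i ∈ ({0,1} : Finset (Fin (n+2))) then W
      else (Fin.cons Y (Fin.cons Z R) : Fin (n+2) → MatN) i)
    = Fin.cons W (Fin.cons W R) := by
  funext i
  refine Fin.cases ?_ (fun j => ?_) i
  · simp [mem01_zero]
  · refine Fin.cases ?_ (fun k => ?_) j
    · simpa [mem01_one] using rfl
    · have h0 := succsucc_ne_zero k
      have h1 := succsucc_ne_one k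
      simp [Finset.mem_insert, h0, h1, Fin.cons_succ]

lemma ifform2_eq_cons (W E' Y Z : MatN) (R : Fin n → MatN) :
    (fun i => if i ∈ ({1} : Finset (Fin (n+2))) then E'
      else if i ∈ ({0,1} : Finset (Fin (n+2))) then W
      else (Fin.cons Y (Fin.cons Z R) : Fin (n+2) → MatN) i)
    = Fin.cons W (Fin.cons E' R) := by
  funext i
  refine Fin.cases ?_ (fun j => ?_) i
  · have : (0 : Fin (n+2)) ≠ 1 := by simp [Fin.ext_iff]
    simp [this, mem01_zero]
  · refine Fin.cases ?_ (fun k => ?_) j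
    · simpa using rfl
    · have h0 := succsucc_ne_zero k
      have h1 := succsucc_ne_one k
      simp [Finset.mem_insert, h0, h1, Fin.cons_succ]

lemma cont_md (F : ℝ → Fin (n+2) → MatN)
    (hF : ∀ k i j, Continuous fun ε => F ε k i j) :
    Continuous fun ε => mixedDisc (F ε) := by
  have : (fun ε => mixedDisc (F ε))
      = fun ε => ((n+2).factorial : ℂ)⁻¹ *
          ∑ σ : Equiv.Perm (Fin (n+2)), (Matrix.of fun i j => F ε (σ j) i j).det := rfl
  rw [this]
  refine continuous_const.mul (continuous_finset_sum _ fun σ _ => ?_)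
  exact Continuous.matrix_det (continuous_matrix fun i j => hF (σ j) i j)

lemma cont_entry_affine (X : MatN) (i j : Fin (n+2)) :
    Continuous fun ε : ℝ => (X + (ε : ℂ) • (1 : MatN)) i j := by
  simp only [Matrix.add_apply, Matrix.smul_apply, smul_eq_mul]
  exact continuous_const.add (Complex.continuous_ofReal.mul continuous_const)

end assembly

end AFProof

/-- complex Alexandrov–Fenchel inequality for mixed discriminants of
positive semidefinite Hermitian matrices `A, A₃, …, Aₙ` and arbitrary Hermitian `B`. -/
theorem af_mixedDisc_posSemidef (n : ℕ)
    (A B : Matrix (Fin (n + 2)) (Fin (n + 2)) ℂ)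
    (rest : Fin n → Matrix (Fin (n + 2)) (Fin (n + 2)) ℂ)
    (hA : A.PosSemidef) (hrest : ∀ i, (rest i).PosSemidef) (hB : B.IsHermitian) :
    (mixedDisc (Fin.cons A (Fin.cons B rest))).re ^ 2 ≥
      (mixedDisc (Fin.cons A (Fin.cons A rest))).re *
        (mixedDisc (Fin.cons B (Fin.cons B rest))).re := by
  classical
  open AFProof Matrix in
  -- families depending on ε
  set Aε : ℝ → Matrix (Fin (n+2)) (Fin (n+2)) ℂ := fun ε => A + (ε : ℂ) • 1 with hAε
  set restε : ℝ → Fin n → Matrix (Fin (n+2)) (Fin (n+2)) ℂ :=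
    fun ε i => rest i + (ε : ℂ) • 1 with hrestε
  -- the three functions of ε
  set fw : ℝ → ℝ := fun ε => (mixedDisc (Fin.cons B (Fin.cons (Aε ε) (restε ε)))).re with hfw
  set fu : ℝ → ℝ := fun ε => (mixedDisc (Fin.cons B (Fin.cons B (restε ε)))).re with hfu
  set fv : ℝ → ℝ := fun ε => (mixedDisc (Fin.cons (Aε ε) (Fin.cons (Aε ε) (restε ε)))).re
    with hfv
  -- inequality for positive ε
  have hineq : ∀ ε : ℝ, 0 < ε → fu ε * fv ε ≤ fw ε ^ 2 := by
    intro ε hε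
    set V : Fin (n+2) → Matrix (Fin (n+2)) (Fin (n+2)) ℂ :=
      Fin.cons 1 (Fin.cons 1 (restε ε)) with hV
    have hVpd : ∀ i, (V i).PosDef := by
      intro i
      refine Fin.cases ?_ (fun j => ?_) i
      · simpa [hV] using Matrix.PosDef.one
      · refine Fin.cases ?_ (fun k => ?_) j
        · simpa [hV] using Matrix.PosDef.one
        · have : (restε ε k).PosDef :=
            Matrix.PosDef.posSemidef_add (hrest k) (pd_smul_real Matrix.PosDef.one hε)
          simpa [hV, Fin.cons_succ] using this
    have hApd : (Aε ε).PosDef :=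
      Matrix.PosDef.posSemidef_add hA (pd_smul_real Matrix.PosDef.one hε)
    have h := quad_ineq n V hVpd B (Aε ε) hB hApd
    rw [hV] at h
    rw [ifform_eq_cons B 1 1 (restε ε), ifform_eq_cons (Aε ε) 1 1 (restε ε),
      ifform2_eq_cons B (Aε ε) 1 1 (restε ε)] at h
    exact h
  -- continuity of the three functions
  have hcontw : Continuous fw := by
    rw [hfw]
    apply Complex.continuous_re.comp
    apply cont_md
    intro k i j
    refine Fin.cases ?_ (fun j' => ?_) k
    · simpa using continuous_const
    · refine Fin.cases ?_ (fun k' => ?_) j'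
      · simpa [hAε, Fin.cons_succ] using cont_entry_affine A i j
      · simpa [hrestε, Fin.cons_succ] using cont_entry_affine (rest k') i j
  have hcontu : Continuous fu := by
    rw [hfu]
    apply Complex.continuous_re.comp
    apply cont_md
    intro k i j
    refine Fin.cases ?_ (fun j' => ?_) k
    · simpa using continuous_const
    · refine Fin.cases ?_ (fun k' => ?_) j'
      · simpa [Fin.cons_succ] using continuous_const
      · simpa [hrestε, Fin.cons_succ] using cont_entry_affine (rest k') i j
  have hcontv : Continuous fv := by
    rw [hfv]
    apply Complex.continuous_re.comp
    apply cont_md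
    intro k i j
    refine Fin.cases ?_ (fun j' => ?_) k
    · simpa [hAε] using cont_entry_affine A i j
    · refine Fin.cases ?_ (fun k' => ?_) j'
      · simpa [hAε, Fin.cons_succ] using cont_entry_affine A i j
      · simpa [hrestε, Fin.cons_succ] using cont_entry_affine (rest k') i j
  -- values at 0
  have hA0 : Aε 0 = A := by
    rw [hAε]; simp
  have hrest0 : restε 0 = rest := by
    funext i; rw [hrestε]; simp
  have h0w : fw 0 = (mixedDisc (Fin.cons B (Fin.cons A rest))).re := by
    simp only [hfw]; rw [hA0, hrest0]
  have h0u : fu 0 = (mixedDisc (Fin.cons B (Fin.cons B rest))).re := by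
    simp only [hfu]; rw [hrest0]
  have h0v : fv 0 = (mixedDisc (Fin.cons A (Fin.cons A rest))).re := by
    simp only [hfv]; rw [hA0, hrest0]
  -- pass to the limit
  have htend : Filter.Tendsto (fun ε => fw ε ^ 2 - fu ε * fv ε)
      (nhdsWithin (0:ℝ) (Set.Ioi 0)) (nhds (fw 0 ^ 2 - fu 0 * fv 0)) :=
    (((hcontw.pow 2).sub (hcontu.mul hcontv)).tendsto 0).mono_left nhdsWithin_le_nhds
  have hev : ∀ᶠ ε in nhdsWithin (0:ℝ) (Set.Ioi 0), 0 ≤ fw ε ^ 2 - fu ε * fv ε :=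
    eventually_mem_nhdsWithin.mono fun ε hε => by
      have := hineq ε hε
      linarith
  have hfinal0 : 0 ≤ fw 0 ^ 2 - fu 0 * fv 0 := ge_of_tendsto htend hev
  -- swap the first two arguments
  have hswapAB : mixedDisc (Fin.cons A (Fin.cons B rest))
      = mixedDisc (Fin.cons B (Fin.cons A rest)) := by
    have hfun : (Fin.cons A (Fin.cons B rest) : Fin (n+2) → Matrix (Fin (n+2)) (Fin (n+2)) ℂ)
        = (Fin.cons B (Fin.cons A rest)) ∘ (Equiv.swap 0 1) := by
      funext i
      refine Fin.cases ?_ (fun j => ?_) i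
      · simp only [Function.comp_apply, Equiv.swap_apply_left, Fin.cons_zero]
        rw [← Fin.succ_zero_eq_one, Fin.cons_succ, Fin.cons_zero]
      · refine Fin.cases ?_ (fun k => ?_) j
        · simp only [Function.comp_apply, Fin.succ_zero_eq_one, Equiv.swap_apply_right,
            Fin.cons_zero]
          rw [← Fin.succ_zero_eq_one, Fin.cons_succ, Fin.cons_zero]
        · have h0 := succsucc_ne_zero (n := n) k
          have h1 := succsucc_ne_one (n := n) k
          simp only [Function.comp_apply, Equiv.swap_apply_of_ne_of_ne h0 h1, Fin.cons_succ]
    rw [hfun, mixedDisc_comp_perm]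
  rw [hswapAB, ← h0w, ← h0u, ← h0v]
  nlinarith [hfinal0]
end

section
/- The wedge product of the constant (1,1)-forms on ℂⁿ associated to n × n complex matrices A₁, …, Aₙ satisfies α(A₁) ∧ ⋯ ∧ α(Aₙ) = n! · D(A₁,…,Aₙ) · 2ⁿ · dV(ℂⁿ), where α(A) = √−1 Σ_{i,j} a_{ij} dzⁱ ∧ dz̄ʲ and dV(ℂⁿ) is the standard Euclidean volume form dx¹ ∧ dy¹ ∧ ⋯ ∧ dxⁿ ∧ dyⁿ. -/
namespace Stmt11

variable (n : ℕ)

/-- The generator `dzⁱ` of the (constant-coefficient) algebra of complex forms on `ℂⁿ`,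
modelled in the exterior algebra over `ℂ` on the `2n`-dimensional space spanned by the
`dzⁱ` (indexed by `Sum.inl i`) and the `dz̄ʲ` (indexed by `Sum.inr j`). -/
noncomputable def dz (i : Fin n) : ExteriorAlgebra ℂ ((Fin n ⊕ Fin n) → ℂ) :=
  ExteriorAlgebra.ι ℂ (Pi.single (Sum.inl i) 1)

/-- The generator `dz̄ʲ`. -/
noncomputable def dzbar (j : Fin n) : ExteriorAlgebra ℂ ((Fin n ⊕ Fin n) → ℂ) :=
  ExteriorAlgebra.ι ℂ (Pi.single (Sum.inr j) 1)

/-- The constant `(1,1)`-form `α(A) = √−1 Σᵢⱼ aᵢⱼ dzⁱ ∧ dz̄ʲ` associated to a matrix. -/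
noncomputable def alphaForm (A : Matrix (Fin n) (Fin n) ℂ) :
    ExteriorAlgebra ℂ ((Fin n ⊕ Fin n) → ℂ) :=
  ∑ i : Fin n, ∑ j : Fin n, (Complex.I * A i j) • (dz n i * dzbar n j)

/-- The Euclidean volume form `dV(ℂⁿ) = dx¹∧dy¹∧⋯∧dxⁿ∧dyⁿ`; since
`dzᵏ ∧ dz̄ᵏ = −2√−1 dxᵏ ∧ dyᵏ`, it equals `(√−1/2)ⁿ dz¹∧dz̄¹∧⋯∧dzⁿ∧dz̄ⁿ`. -/
noncomputable def volForm : ExteriorAlgebra ℂ ((Fin n ⊕ Fin n) → ℂ) :=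
  ((Complex.I / 2) ^ n) • ((List.finRange n).map fun k => dz n k * dzbar n k).prod

/-! ### Auxiliary machinery -/

open ExteriorAlgebra

/-- Abbreviation for the underlying module. -/
abbrev VV (n : ℕ) := (Fin n ⊕ Fin n) → ℂ

/-- The basis vector corresponding to `dzⁱ`. -/
noncomputable def ev (i : Fin n) : VV n := Pi.single (Sum.inl i) 1

/-- The basis vector corresponding to `dz̄ʲ`. -/
noncomputable def fv (j : Fin n) : VV n := Pi.single (Sum.inr j) 1

lemma dz_eq (i : Fin n) : dz n i = ExteriorAlgebra.ι ℂ (ev n i) := rfl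

lemma dzbar_eq (j : Fin n) : dzbar n j = ExteriorAlgebra.ι ℂ (fv n j) := rfl

lemma iota_anticomm (x y : VV n) :
    ExteriorAlgebra.ι ℂ x * ExteriorAlgebra.ι ℂ y
      = -(ExteriorAlgebra.ι ℂ y * ExteriorAlgebra.ι ℂ x) :=
  eq_neg_of_add_eq_zero_left (ExteriorAlgebra.ι_add_mul_swap x y)

lemma iota_mul_iotaMulti (m : ℕ) (x : Fin m → VV n) (y : VV n) :
    ExteriorAlgebra.ι ℂ y * ExteriorAlgebra.ιMulti ℂ m x
      = ((-1 : ℂ) ^ m) • (ExteriorAlgebra.ιMulti ℂ m x * ExteriorAlgebra.ι ℂ y) := by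
  induction m with
  | zero =>
    simp
  | succ m ih =>
    rw [ExteriorAlgebra.ιMulti_succ_apply]
    calc ExteriorAlgebra.ι ℂ y * (ExteriorAlgebra.ι ℂ (x 0)
          * ExteriorAlgebra.ιMulti ℂ m (Matrix.vecTail x))
        = (ExteriorAlgebra.ι ℂ y * ExteriorAlgebra.ι ℂ (x 0))
            * ExteriorAlgebra.ιMulti ℂ m (Matrix.vecTail x) := by rw [mul_assoc]
      _ = -(ExteriorAlgebra.ι ℂ (x 0) *
            (ExteriorAlgebra.ι ℂ y * ExteriorAlgebra.ιMulti ℂ m (Matrix.vecTail x))) := by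
            rw [iota_anticomm, neg_mul, mul_assoc]
      _ = -(ExteriorAlgebra.ι ℂ (x 0) *
            (((-1 : ℂ) ^ m) • (ExteriorAlgebra.ιMulti ℂ m (Matrix.vecTail x)
              * ExteriorAlgebra.ι ℂ y))) := by rw [ih]
      _ = ((-1 : ℂ) ^ (m + 1)) • (ExteriorAlgebra.ι ℂ (x 0)
            * ExteriorAlgebra.ιMulti ℂ m (Matrix.vecTail x) * ExteriorAlgebra.ι ℂ y) := by
            rw [mul_smul_comm, ← mul_assoc, pow_succ, mul_smul, neg_one_smul, smul_neg]

/-- Separating an interleaved product of pairs into two blocks. -/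
lemma prod_pairs (m : ℕ) (x y : Fin m → VV n) :
    (List.ofFn fun k => ExteriorAlgebra.ι ℂ (x k) * ExteriorAlgebra.ι ℂ (y k)).prod
      = ((-1 : ℂ) ^ (m.choose 2)) •
          (ExteriorAlgebra.ιMulti ℂ m x * ExteriorAlgebra.ιMulti ℂ m y) := by
  induction m with
  | zero => simp
  | succ m ih =>
    rw [List.ofFn_succ, List.prod_cons, ih (fun k => x k.succ) (fun k => y k.succ)]
    rw [ExteriorAlgebra.ιMulti_succ_apply, ExteriorAlgebra.ιMulti_succ_apply]
    have hvt : Matrix.vecTail x = fun k => x k.succ := rfl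
    have hvt' : Matrix.vecTail y = fun k => y k.succ := rfl
    rw [hvt, hvt']
    set X := ExteriorAlgebra.ιMulti ℂ m (fun k => x k.succ) with hX
    set Y := ExteriorAlgebra.ιMulti ℂ m (fun k => y k.succ) with hY
    have hmove : ExteriorAlgebra.ι ℂ (y 0) * X
        = ((-1 : ℂ) ^ m) • (X * ExteriorAlgebra.ι ℂ (y 0)) := iota_mul_iotaMulti n m _ _
    have hchoose : (m + 1).choose 2 = m.choose 1 + m.choose 2 := Nat.choose_succ_succ m 1
    calc ExteriorAlgebra.ι ℂ (x 0) * ExteriorAlgebra.ι ℂ (y 0)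
          * (((-1 : ℂ) ^ (m.choose 2)) • (X * Y))
        = ((-1 : ℂ) ^ (m.choose 2)) •
            (ExteriorAlgebra.ι ℂ (x 0) * (ExteriorAlgebra.ι ℂ (y 0) * X) * Y) := by
          rw [mul_smul_comm]; ring_nf; rw [mul_assoc, mul_assoc, mul_assoc]
      _ = ((-1 : ℂ) ^ (m.choose 2)) •
            (ExteriorAlgebra.ι ℂ (x 0) * (((-1 : ℂ) ^ m) • (X * ExteriorAlgebra.ι ℂ (y 0))) * Y)
          := by rw [hmove]
      _ = ((-1 : ℂ) ^ ((m + 1).choose 2)) •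
            (ExteriorAlgebra.ι ℂ (x 0) * X * (ExteriorAlgebra.ι ℂ (y 0) * Y)) := by
          rw [mul_smul_comm, smul_mul_assoc, smul_smul, hchoose, Nat.choose_one_right,
            ← pow_add, Nat.add_comm m (m.choose 2)]
          congr 1
          simp only [mul_assoc]

/-- The interleaved product `dz^{f 1} ∧ dz̄^{g 1} ∧ ⋯`. -/
noncomputable def W (f g : Fin n → Fin n) : ExteriorAlgebra ℂ ((Fin n ⊕ Fin n) → ℂ) :=
  (List.ofFn fun k => dz n (f k) * dzbar n (g k)).prod

lemma W_eq (f g : Fin n → Fin n) :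
    W n f g = ((-1 : ℂ) ^ (n.choose 2)) •
      (ExteriorAlgebra.ιMulti ℂ n (fun k => ev n (f k))
        * ExteriorAlgebra.ιMulti ℂ n (fun k => fv n (g k))) := by
  simpa [W, dz_eq, dzbar_eq] using prod_pairs n n (fun k => ev n (f k)) (fun k => fv n (g k))

lemma W_zero_left {f : Fin n → Fin n} (g : Fin n → Fin n)
    (hf : ¬ Function.Injective f) : W n f g = 0 := by
  obtain ⟨i, j, hij, hne⟩ := Function.not_injective_iff.mp hf
  rw [W_eq]
  have : ExteriorAlgebra.ιMulti ℂ n (fun k => ev n (f k)) = 0 :=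
    AlternatingMap.map_eq_zero_of_eq _ _ (by rw [hij]) hne
  rw [this, zero_mul, smul_zero]

lemma W_zero_right (f : Fin n → Fin n) {g : Fin n → Fin n}
    (hg : ¬ Function.Injective g) : W n f g = 0 := by
  obtain ⟨i, j, hij, hne⟩ := Function.not_injective_iff.mp hg
  rw [W_eq]
  have : ExteriorAlgebra.ιMulti ℂ n (fun k => fv n (g k)) = 0 :=
    AlternatingMap.map_eq_zero_of_eq _ _ (by rw [hij]) hne
  rw [this, mul_zero, smul_zero]

/-- The complex-valued sign of a permutation. -/
noncomputable def sgn (σ : Equiv.Perm (Fin n)) : ℂ := ((Equiv.Perm.sign σ : ℤ) : ℂ)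

lemma iotaMulti_comp_perm (v : Fin n → VV n) (σ : Equiv.Perm (Fin n)) :
    ExteriorAlgebra.ιMulti ℂ n (fun k => v (σ k))
      = sgn n σ • ExteriorAlgebra.ιMulti ℂ n v := by
  have := AlternatingMap.map_perm (ExteriorAlgebra.ιMulti ℂ n) v σ
  have h2 : (v ∘ σ) = fun k => v (σ k) := rfl
  rw [h2] at this
  rw [this, sgn, Units.smul_def, Int.cast_smul_eq_zsmul]

lemma W_perm (σ τ : Equiv.Perm (Fin n)) :
    W n σ τ = (sgn n σ * sgn n τ) • W n id id := by
  rw [W_eq, W_eq, iotaMulti_comp_perm, iotaMulti_comp_perm, smul_mul_assoc, mul_smul_comm,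
    smul_smul, smul_smul, smul_comm]
  simp [mul_smul]

lemma sum_perm {M : Type*} [AddCommMonoid M] (F : (Fin n → Fin n) → M)
    (h0 : ∀ f, ¬ Function.Bijective f → F f = 0) :
    ∑ f : Fin n → Fin n, F f = ∑ σ : Equiv.Perm (Fin n), F ⇑σ := by
  classical
  rw [← Finset.sum_filter_of_ne (p := fun f : Fin n → Fin n => Function.Bijective f)
    (fun f _ hF => by by_contra hb; exact hF (h0 f hb))]
  refine (Finset.sum_bij' (fun (σ : Equiv.Perm (Fin n)) _ => ⇑σ)
    (fun f hf => Equiv.ofBijective f (by simpa using hf)) ?_ ?_ ?_ ?_ ?_).symm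
  · exact fun σ _ => Finset.mem_filter.mpr ⟨Finset.mem_univ _, σ.bijective⟩
  · exact fun f hf => Finset.mem_univ _
  · intro σ _; exact Equiv.ext fun x => rfl
  · intro f hf; rfl
  · intro σ _; rfl

/-! ### The main theorem -/

set_option maxHeartbeats 2000000 in
/-- `α(A₁) ∧ ⋯ ∧ α(Aₙ) = n! · D(A₁,…,Aₙ) · 2ⁿ · dV(ℂⁿ)`. -/
theorem wedge_alphaForm_eq_mixedDisc (A : Fin n → Matrix (Fin n) (Fin n) ℂ) :
    ((List.finRange n).map fun k => alphaForm n (A k)).prod =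
      ((n.factorial : ℂ) * mixedDisc A * 2 ^ n) • volForm n := by
  classical
  -- notation
  set E := ExteriorAlgebra ℂ ((Fin n ⊕ Fin n) → ℂ)
  let F : MultilinearMap ℂ (fun _ : Fin n => E) E := MultilinearMap.mkPiAlgebraFin ℂ n E
  let c : Fin n → Fin n × Fin n → ℂ := fun k p => Complex.I * A k p.1 p.2
  let w : Fin n × Fin n → E := fun p => dz n p.1 * dzbar n p.2
  -- Step 1: the left side as a multilinear map applied to sums
  have halpha : ∀ k, alphaForm n (A k) = ∑ p : Fin n × Fin n, c k p • w p := by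
    intro k
    rw [alphaForm, Fintype.sum_prod_type]
  have h1 : ((List.finRange n).map fun k => alphaForm n (A k)).prod
      = F (fun k => ∑ p : Fin n × Fin n, c k p • w p) := by
    simp only [halpha, F, MultilinearMap.mkPiAlgebraFin_apply, List.ofFn_eq_map]
  -- Step 2: expand by multilinearity
  have h2 : F (fun k => ∑ p : Fin n × Fin n, c k p • w p)
      = ∑ r : Fin n → Fin n × Fin n, (∏ k, c k (r k)) • F (fun k => w (r k)) := by
    rw [F.map_sum (g := fun k p => c k p • w p)]
    refine Finset.sum_congr rfl fun r _ => ?_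
    exact F.map_smul_univ (fun k => c k (r k)) (fun k => w (r k))
  -- Identify the inner product of generators with `W`
  have h3 : ∀ r : Fin n → Fin n × Fin n,
      F (fun k => w (r k)) = W n (fun k => (r k).1) (fun k => (r k).2) := by
    intro r
    simp [F, MultilinearMap.mkPiAlgebraFin_apply, W, w, List.ofFn_eq_map]
  -- Step 3: reindex over pairs of functions
  have h4 : ∑ r : Fin n → Fin n × Fin n,
        (∏ k, c k (r k)) • W n (fun k => (r k).1) (fun k => (r k).2)
      = ∑ f : Fin n → Fin n, ∑ g : Fin n → Fin n,
          (∏ k, Complex.I * A k (f k) (g k)) • W n f g := by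
    have e1 : ∑ r : Fin n → Fin n × Fin n,
          (∏ k, c k (r k)) • W n (fun k => (r k).1) (fun k => (r k).2)
        = ∑ q : (Fin n → Fin n) × (Fin n → Fin n),
            (∏ k, Complex.I * A k (q.1 k) (q.2 k)) • W n q.1 q.2 :=
      Fintype.sum_equiv (Equiv.arrowProdEquivProdArrow (Fin n) (fun _ => Fin n) (fun _ => Fin n))
        _ _ (fun r => rfl)
    rw [e1, Fintype.sum_prod_type]
  -- Step 4: only bijections survive; convert to sums over permutations
  have h5 : ∑ f : Fin n → Fin n, ∑ g : Fin n → Fin n,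
        (∏ k, Complex.I * A k (f k) (g k)) • W n f g
      = ∑ σ : Equiv.Perm (Fin n), ∑ τ : Equiv.Perm (Fin n),
          (∏ k, Complex.I * A k (σ k) (τ k)) • W n ⇑σ ⇑τ := by
    rw [sum_perm n _ (fun f hf => ?_)]
    · refine Finset.sum_congr rfl fun σ _ => ?_
      rw [sum_perm n _ (fun g hg => ?_)]
      rw [W_zero_right n _ (fun hinj => hg (Finite.injective_iff_bijective.mp hinj)), smul_zero]
    · refine Finset.sum_eq_zero fun g _ => ?_
      rw [W_zero_left n _ (fun hinj => hf (Finite.injective_iff_bijective.mp hinj)), smul_zero]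
  -- Step 5: use the sign formula
  have h6 : ∑ σ : Equiv.Perm (Fin n), ∑ τ : Equiv.Perm (Fin n),
        (∏ k, Complex.I * A k (σ k) (τ k)) • W n ⇑σ ⇑τ
      = (∑ σ : Equiv.Perm (Fin n), ∑ τ : Equiv.Perm (Fin n),
          (∏ k, Complex.I * A k (σ k) (τ k)) * (sgn n σ * sgn n τ)) • W n id id := by
    rw [Finset.sum_smul]
    refine Finset.sum_congr rfl fun σ _ => ?_
    rw [Finset.sum_smul]
    refine Finset.sum_congr rfl fun τ _ => ?_
    rw [W_perm, smul_smul]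
  -- Right side in terms of `W id id`
  have hvol : volForm n = ((Complex.I / 2) ^ n) • W n id id := by
    rw [volForm, W]
    congr 1
    rw [List.ofFn_eq_map]
    rfl
  -- The scalar identity
  have hscal : ∑ σ : Equiv.Perm (Fin n), ∑ τ : Equiv.Perm (Fin n),
        (∏ k, Complex.I * A k (σ k) (τ k)) * (sgn n σ * sgn n τ)
      = (n.factorial : ℂ) * mixedDisc A * 2 ^ n * (Complex.I / 2) ^ n := by
    -- simplify the right side
    have hfac : (n.factorial : ℂ) ≠ 0 := Nat.cast_ne_zero.mpr n.factorial_ne_zero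
    have hRHS : (n.factorial : ℂ) * mixedDisc A * 2 ^ n * (Complex.I / 2) ^ n
        = (∑ s : Equiv.Perm (Fin n), (Matrix.of fun i j => A (s j) i j).det)
            * Complex.I ^ n := by
      have h2I : (2 : ℂ) ^ n * (Complex.I / 2) ^ n = Complex.I ^ n := by
        rw [← mul_pow]
        congr 1
        rw [mul_comm, div_mul_cancel₀ _ (two_ne_zero)]
      rw [mixedDisc, ← mul_assoc, mul_inv_cancel₀ hfac, one_mul, mul_assoc, h2I]
    rw [hRHS]
    -- expand the determinant
    have hdet : ∀ s : Equiv.Perm (Fin n),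
        (Matrix.of fun i j => A (s j) i j).det
          = ∑ π : Equiv.Perm (Fin n), sgn n π * ∏ i, A (s i) (π i) i := by
      intro s
      rw [Matrix.det_apply']
      rfl
    -- pull out `I ^ n` from the left side
    have hIpow : ∀ σ τ : Equiv.Perm (Fin n),
        (∏ k, Complex.I * A k (σ k) (τ k)) * (sgn n σ * sgn n τ)
          = (sgn n σ * sgn n τ * ∏ k, A k (σ k) (τ k)) * Complex.I ^ n := by
      intro σ τ
      rw [Finset.prod_mul_distrib, Finset.prod_const, Finset.card_univ, Fintype.card_fin]
      ring
    simp only [hIpow, hdet, ← Finset.sum_mul]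
    congr 1
    -- the core combinatorial identity
    have lhs_eq : ∑ σ : Equiv.Perm (Fin n), ∑ τ : Equiv.Perm (Fin n),
          sgn n σ * sgn n τ * ∏ k, A k (σ k) (τ k)
        = ∑ p : Equiv.Perm (Fin n) × Equiv.Perm (Fin n),
            sgn n p.1 * sgn n p.2 * ∏ k, A k (p.1 k) (p.2 k) :=
      (Fintype.sum_prod_type (fun p : Equiv.Perm (Fin n) × Equiv.Perm (Fin n) =>
        sgn n p.1 * sgn n p.2 * ∏ k, A k (p.1 k) (p.2 k))).symm
    have rhs_eq : ∑ s : Equiv.Perm (Fin n), ∑ π : Equiv.Perm (Fin n),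
          sgn n π * ∏ i, A (s i) (π i) i
        = ∑ q : Equiv.Perm (Fin n) × Equiv.Perm (Fin n),
            sgn n q.2 * ∏ i, A (q.1 i) (q.2 i) i :=
      (Fintype.sum_prod_type (fun q : Equiv.Perm (Fin n) × Equiv.Perm (Fin n) =>
        sgn n q.2 * ∏ i, A (q.1 i) (q.2 i) i)).symm
    rw [lhs_eq, rhs_eq]
    refine (Fintype.sum_equiv
      (⟨fun p : Equiv.Perm (Fin n) × Equiv.Perm (Fin n) => (p.2 * p.1⁻¹, p.1⁻¹),
        fun q => (q.2⁻¹, q.1 * q.2⁻¹), fun p => by simp [mul_assoc], fun q => by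
          simp [mul_assoc]⟩)
      _ _ (fun p => ?_)).symm
    obtain ⟨s, π⟩ := p
    simp only [Equiv.coe_fn_mk]
    have hsgn : sgn n (π * s⁻¹) * sgn n s⁻¹ = sgn n π := by
      have h : Equiv.Perm.sign (π * s⁻¹) * Equiv.Perm.sign s⁻¹ = Equiv.Perm.sign π := by
        rw [map_mul, mul_assoc, Int.units_mul_self, mul_one]
      simp only [sgn]
      rw [← Int.cast_mul, ← Units.val_mul, h]
    have hprod : ∏ k, A k ((π * s⁻¹) k) (s⁻¹ k) = ∏ i, A (s i) (π i) i := by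
      rw [← Equiv.prod_comp s (fun k => A k ((π * s⁻¹) k) (s⁻¹ k))]
      refine Finset.prod_congr rfl fun i _ => ?_
      simp [Equiv.Perm.mul_apply]
    rw [hsgn, hprod]
  -- assemble
  rw [h1, h2]
  simp only [h3]
  rw [h4, h5, h6, hscal, hvol, smul_smul]

end Stmt11
end

section
/- Abstract induction form of the higher Alexandrov–Fenchel inequality: let C be a convex cone in a real vector space and suppose P : C^n → ℝ is a symmetric multilinear (under nonnegative combinations) function, taking positive values on an appropriate subcone C⁺, which satisfies P(u, v, w₃, …, wₙ)² ≥ P(u, u, w₃, …, wₙ)·P(v, v, w₃, …, wₙ) for all u, v, w₃, …, wₙ ∈ C⁺. Then for every 2 ≤ m ≤ n and all γ₁, …, γₙ ∈ C⁺, P(γ₁, …, γ_m, γ_{m+1}, …, γₙ)^m ≥ ∏_{i=1}^m P(γᵢ[m], γ_{m+1}, …, γₙ), where γᵢ[m] denotes γᵢ repeated m times. -/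
/-- Numeric log-concavity lemma: if `b` is positive and log-concave up to `M`,
then `b M ^ (M-1) * b 0 ≤ b (M-1) ^ M`. -/
lemma af_logconcave_aux (M : ℕ) (hM : 1 ≤ M) (b : ℕ → ℝ)
    (hb : ∀ j, j ≤ M → 0 < b j)
    (hlc : ∀ j, j + 2 ≤ M → b j * b (j + 2) ≤ b (j + 1) ^ 2) :
    b M ^ (M - 1) * b 0 ≤ b (M - 1) ^ M := by
  have aux : ∀ d j, j + 1 + d = M → b M * b j ≤ b (M - 1) * b (j + 1) := by
    intro d
    induction d with
    | zero =>
      intro j hj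
      have h1 : M - 1 = j := by omega
      have h2 : j + 1 = M := by omega
      rw [h1, h2, mul_comm]
    | succ d ih =>
      intro j hj
      have hIH := ih (j + 1) (by omega)
      have hl := hlc j (by omega)
      have h2 : 0 < b (j + 2) := hb _ (by omega)
      have hMpos : 0 < b M := hb _ le_rfl
      have key : (b M * b j) * b (j + 2) ≤ (b (M - 1) * b (j + 1)) * b (j + 2) := by
        calc (b M * b j) * b (j + 2) = b M * (b j * b (j + 2)) := by ring
          _ ≤ b M * (b (j + 1) ^ 2) := mul_le_mul_of_nonneg_left hl hMpos.le
          _ = (b M * b (j + 1)) * b (j + 1) := by ring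
          _ ≤ (b (M - 1) * b (j + 2)) * b (j + 1) :=
              mul_le_mul_of_nonneg_right hIH (hb _ (by omega)).le
          _ = (b (M - 1) * b (j + 1)) * b (j + 2) := by ring
      exact le_of_mul_le_mul_right key h2
  have aux2 : ∀ k j, j + k + 1 = M → b M ^ k * b j ≤ b (M - 1) ^ (k + 1) := by
    intro k
    induction k with
    | zero =>
      intro j hj
      have hj' : j = M - 1 := by omega
      simp [hj']
    | succ k ih =>
      intro j hj
      have h1 : b M ^ (k + 1) * b j = b M ^ k * (b M * b j) := by ring
      rw [h1]
      calc b M ^ k * (b M * b j) ≤ b M ^ k * (b (M - 1) * b (j + 1)) :=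
            mul_le_mul_of_nonneg_left (aux (k + 1) j (by omega))
              (pow_nonneg (hb _ le_rfl).le _)
        _ = b (M - 1) * (b M ^ k * b (j + 1)) := by ring
        _ ≤ b (M - 1) * b (M - 1) ^ (k + 1) :=
            mul_le_mul_of_nonneg_left (ih (j + 1) (by omega)) (hb _ (by omega)).le
        _ = b (M - 1) ^ (k + 2) := by ring
  have h := aux2 (M - 1) 0 (by omega)
  have hM1 : M - 1 + 1 = M := by omega
  rwa [hM1] at h

noncomputable def afF {V : Type*} [AddCommGroup V] (n : ℕ)
    (P : (Fin (n + 2) → V) → ℝ) (l : List V) : ℝ :=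
  P (fun k => l.getD (k : ℕ) 0)

lemma af_getD_two {V : Type*} [AddCommGroup V] (pre : List V) (a b : V) (l : List V)
    (k : ℕ) :
    (pre ++ a :: b :: l).getD k 0 =
      if k < pre.length then pre.getD k 0
      else if k = pre.length then a
      else if k = pre.length + 1 then b
      else l.getD (k - pre.length - 2) 0 := by
  split_ifs with h1 h2 h3
  · exact List.getD_append _ _ _ _ h1
  · rw [List.getD_append_right _ _ _ _ (by omega), h2, Nat.sub_self, List.getD_cons_zero]
  · rw [List.getD_append_right _ _ _ _ (by omega), h3]
    simp
  · rw [List.getD_append_right _ _ _ _ (by omega)]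
    have he : k - pre.length = (k - pre.length - 2) + 2 := by omega
    rw [he, List.getD_cons_succ, List.getD_cons_succ, Nat.add_sub_cancel]

lemma afF_mem {V : Type*} [AddCommGroup V] (n : ℕ) (S : Set V) (l : List V)
    (hl : l.length = n + 2) (hS : ∀ x ∈ l, x ∈ S) (k : Fin (n + 2)) :
    l.getD (k : ℕ) 0 ∈ S := by
  have hk : (k : ℕ) < l.length := by omega
  rw [List.getD_eq_getElem l 0 hk]
  exact hS _ (List.getElem_mem hk)

lemma afF_perm {V : Type*} [AddCommGroup V] {C : Set V} (n : ℕ)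
    (P : (Fin (n + 2) → V) → ℝ)
    (hsymm : ∀ (σ : Equiv.Perm (Fin (n + 2))) (u : Fin (n + 2) → V),
      (∀ k, u k ∈ C) → P (u ∘ σ) = P u)
    (l₁ l₂ : List V) (h : l₁.Perm l₂) (hlen : l₁.length = n + 2)
    (hmem : ∀ x ∈ l₁, x ∈ C) : afF n P l₁ = afF n P l₂ := by
  have key : ∀ (l₁ l₂ : List V), l₁.Perm l₂ → ∀ pre : List V,
      (∀ x ∈ pre ++ l₁, x ∈ C) → (pre ++ l₁).length = n + 2 →
      afF n P (pre ++ l₁) = afF n P (pre ++ l₂) := by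
    intro l₁ l₂ h
    induction h with
    | nil => intro pre _ _; rfl
    | cons x h ih =>
      intro pre hmem hlen
      rename_i t₁ t₂
      have e1 : pre ++ x :: t₁ = (pre ++ [x]) ++ t₁ := by simp
      have e2 : pre ++ x :: t₂ = (pre ++ [x]) ++ t₂ := by simp
      rw [e1, e2]
      exact ih (pre ++ [x]) (by rw [← e1]; exact hmem) (by rw [← e1]; exact hlen)
    | swap x y l =>
      intro pre hmem hlen
      have hp1 : pre.length + 1 < n + 2 := by simp at hlen; omega
      set p := pre.length with hp
      set i : Fin (n + 2) := ⟨p, by omega⟩ with hi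
      set j : Fin (n + 2) := ⟨p + 1, by omega⟩ with hjdef
      have hij : i ≠ j := by simp [hi, hjdef, Fin.ext_iff]
      have hfe : (fun k : Fin (n + 2) => (pre ++ y :: x :: l).getD (k : ℕ) 0) =
          (fun k : Fin (n + 2) => (pre ++ x :: y :: l).getD (k : ℕ) 0) ∘ (Equiv.swap i j) := by
        funext k
        simp only [Function.comp]
        rcases eq_or_ne k i with rfl | hki
        · rw [Equiv.swap_apply_left, af_getD_two, af_getD_two]
          simp [hi, hjdef, hp]
        · rcases eq_or_ne k j with rfl | hkj
          · rw [Equiv.swap_apply_right, af_getD_two, af_getD_two]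
            simp [hi, hjdef, hp]
          · rw [Equiv.swap_apply_of_ne_of_ne hki hkj, af_getD_two, af_getD_two]
            have hk1 : (k : ℕ) ≠ p := fun hh => hki (Fin.ext (by simpa [hi] using hh))
            have hk2 : (k : ℕ) ≠ p + 1 := fun hh => hkj (Fin.ext (by simpa [hjdef] using hh))
            split_ifs <;> rfl
      have hmem2 : ∀ k : Fin (n + 2), (pre ++ x :: y :: l).getD (k : ℕ) 0 ∈ C := by
        refine afF_mem n C _ (by simp at hlen ⊢; omega) ?_
        intro z hz
        apply hmem
        simp only [List.mem_append, List.mem_cons] at hz ⊢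
        tauto
      show P _ = P _
      rw [hfe]
      exact hsymm _ _ hmem2
    | trans h1 h2 ih1 ih2 =>
      intro pre hmem hlen
      rw [ih1 pre hmem hlen]
      refine ih2 pre ?_ ?_
      · intro z hz
        apply hmem
        simp only [List.mem_append] at hz ⊢
        rcases hz with hz | hz
        · exact Or.inl hz
        · exact Or.inr (h1.mem_iff.mpr hz)
      · simp only [List.length_append] at hlen ⊢
        rw [← h1.length_eq]
        exact hlen
  have := key l₁ l₂ h [] (by simpa using hmem) (by simpa using hlen)
  simpa using this

section AF
variable {V : Type*} [AddCommGroup V] {C Cp : Set V} (hsub : Cp ⊆ C)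
variable (n : ℕ) (P : (Fin (n + 2) → V) → ℝ)
variable (hsymm : ∀ (σ : Equiv.Perm (Fin (n + 2))) (u : Fin (n + 2) → V),
      (∀ k, u k ∈ C) → P (u ∘ σ) = P u)
variable (hpos : ∀ u : Fin (n + 2) → V, (∀ k, u k ∈ Cp) → 0 < P u)
variable (hAF : ∀ (w : Fin (n + 2) → V), (∀ k, w k ∈ Cp) → ∀ u ∈ Cp, ∀ v ∈ Cp,
      P (Function.update (Function.update w 0 u) 1 u) *
          P (Function.update (Function.update w 0 v) 1 v) ≤
        (P (Function.update (Function.update w 0 u) 1 v)) ^ 2)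

include hpos in
lemma afF_pos (l : List V) (hl : l.length = n + 2) (hmem : ∀ x ∈ l, x ∈ Cp) :
    0 < afF n P l :=
  hpos _ (afF_mem n Cp l hl hmem)

include hAF in
lemma afF_AF (u v : V) (hu : u ∈ Cp) (hv : v ∈ Cp) (s : List V)
    (hs : s.length = n) (hsmem : ∀ x ∈ s, x ∈ Cp) :
    afF n P (u :: u :: s) * afF n P (v :: v :: s) ≤ afF n P (u :: v :: s) ^ 2 := by
  set w : Fin (n + 2) → V := fun k => (u :: u :: s).getD (k : ℕ) 0 with hw
  have hwmem : ∀ k, w k ∈ Cp := by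
    intro k
    refine afF_mem n Cp _ (by simp [hs]) ?_ k
    intro z hz
    rcases List.mem_cons.1 hz with rfl | hz
    · exact hu
    rcases List.mem_cons.1 hz with rfl | hz
    · exact hu
    · exact hsmem _ hz
  have hupd : ∀ a b : V,
      Function.update (Function.update w 0 a) 1 b =
        fun k : Fin (n + 2) => (a :: b :: s).getD (k : ℕ) 0 := by
    intro a b
    funext k
    rcases k with ⟨k, hk⟩
    rcases k with _ | _ | k
    · have h01 : ((⟨0, hk⟩ : Fin (n + 2))) ≠ 1 := by simp [Fin.ext_iff]
      rw [Function.update_of_ne h01]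
      have h00 : ((⟨0, hk⟩ : Fin (n + 2))) = 0 := rfl
      rw [h00, Function.update_self]
      simp
    · have h11 : ((⟨1, hk⟩ : Fin (n + 2))) = 1 := rfl
      rw [h11, Function.update_self]
      simp
    · have h1 : ((⟨k + 2, hk⟩ : Fin (n + 2))) ≠ 1 := by simp [Fin.ext_iff]
      have h0 : ((⟨k + 2, hk⟩ : Fin (n + 2))) ≠ 0 := by simp [Fin.ext_iff]
      rw [Function.update_of_ne h1, Function.update_of_ne h0]
      simp only [hw]
      simp [List.getD_cons_succ]
  have h := hAF w hwmem u hu v hv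
  rwa [hupd u u, hupd v v, hupd u v] at h

include hsub hsymm hpos hAF in
lemma afF_chain (M : ℕ) (hM : 2 ≤ M) (u v : V) (hu : u ∈ Cp) (hv : v ∈ Cp)
    (t : List V) (ht : t.length + M = n + 2) (htmem : ∀ x ∈ t, x ∈ Cp) :
    afF n P (List.replicate M u ++ t) ^ (M - 1) * afF n P (List.replicate M v ++ t) ≤
      afF n P (List.replicate (M - 1) u ++ v :: t) ^ M := by
  set b : ℕ → ℝ := fun j => afF n P (List.replicate j u ++ List.replicate (M - j) v ++ t)
    with hb_def
  have hblen : ∀ j, j ≤ M →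
      (List.replicate j u ++ List.replicate (M - j) v ++ t).length = n + 2 := by
    intro j hj; simp; omega
  have hbmem : ∀ j, ∀ x ∈ List.replicate j u ++ List.replicate (M - j) v ++ t, x ∈ Cp := by
    intro j x hx
    rcases List.mem_append.1 hx with hx | hx
    · rcases List.mem_append.1 hx with hx | hx
      · rwa [List.eq_of_mem_replicate hx]
      · rwa [List.eq_of_mem_replicate hx]
    · exact htmem _ hx
  have hb : ∀ j, j ≤ M → 0 < b j := fun j hj =>
    afF_pos n P hpos _ (hblen j hj) (hbmem j)
  have hlc : ∀ j, j + 2 ≤ M → b j * b (j + 2) ≤ b (j + 1) ^ 2 := by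
    intro j hj
    set s : List V := List.replicate j u ++ (List.replicate (M - j - 2) v ++ t) with hs_def
    have hslen : s.length = n := by simp [hs_def]; omega
    have hsmem : ∀ x ∈ s, x ∈ Cp := by
      intro x hx
      rcases List.mem_append.1 hx with hx | hx
      · rwa [List.eq_of_mem_replicate hx]
      rcases List.mem_append.1 hx with hx | hx
      · rwa [List.eq_of_mem_replicate hx]
      · exact htmem _ hx
    have e1 : b j = afF n P (v :: v :: s) := by
      have hperm : (List.replicate j u ++ List.replicate (M - j) v ++ t).Perm
          (v :: v :: s) := by
        have hrw : List.replicate j u ++ List.replicate (M - j) v ++ t =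
            List.replicate j u ++ (v :: v :: (List.replicate (M - j - 2) v ++ t)) := by
          rw [show M - j = (M - j - 2) + 1 + 1 by omega, List.replicate_succ,
            List.replicate_succ, List.append_assoc]
          simp
        rw [hrw, hs_def]
        exact List.perm_middle.trans (List.Perm.cons v List.perm_middle)
      exact afF_perm n P hsymm _ _ hperm (hblen j (by omega))
        (fun x hx => hsub (hbmem j x hx))
    have e2 : b (j + 2) = afF n P (u :: u :: s) := by
      simp only [hb_def]
      rw [show M - (j + 2) = M - j - 2 by omega,
        show j + 2 = j + 1 + 1 from rfl, List.replicate_succ, List.replicate_succ,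
        hs_def, List.append_assoc]
      simp
    have e3 : b (j + 1) = afF n P (u :: v :: s) := by
      have hperm : (List.replicate (j + 1) u ++ List.replicate (M - (j + 1)) v ++ t).Perm
          (u :: v :: s) := by
        have hrw : List.replicate (j + 1) u ++ List.replicate (M - (j + 1)) v ++ t =
            u :: (List.replicate j u ++ (v :: (List.replicate (M - j - 2) v ++ t))) := by
          rw [show M - (j + 1) = (M - j - 2) + 1 by omega, List.replicate_succ,
            List.replicate_succ, List.append_assoc]
          simp
        rw [hrw, hs_def]
        exact List.Perm.cons u List.perm_middle
      exact afF_perm n P hsymm _ _ hperm (hblen (j + 1) (by omega))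
        (fun x hx => hsub (hbmem (j + 1) x hx))
    rw [e1, e2, e3, mul_comm]
    exact afF_AF n P hAF u v hu hv s hslen hsmem
  have key := af_logconcave_aux M (by omega) b hb hlc
  have eM : b M = afF n P (List.replicate M u ++ t) := by
    simp [hb_def]
  have e0 : b 0 = afF n P (List.replicate M v ++ t) := by
    simp [hb_def]
  have eM1 : b (M - 1) = afF n P (List.replicate (M - 1) u ++ v :: t) := by
    simp only [hb_def]
    rw [show M - (M - 1) = 1 by omega]
    simp [List.append_assoc]
  rwa [eM, e0, eM1] at key
end AF

section AF2
variable {V : Type*} [AddCommGroup V] {C Cp : Set V} (hsub : Cp ⊆ C)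
variable (n : ℕ) (P : (Fin (n + 2) → V) → ℝ)
variable (hsymm : ∀ (σ : Equiv.Perm (Fin (n + 2))) (u : Fin (n + 2) → V),
      (∀ k, u k ∈ C) → P (u ∘ σ) = P u)
variable (hpos : ∀ u : Fin (n + 2) → V, (∀ k, u k ∈ Cp) → 0 < P u)
variable (hAF : ∀ (w : Fin (n + 2) → V), (∀ k, w k ∈ Cp) → ∀ u ∈ Cp, ∀ v ∈ Cp,
      P (Function.update (Function.update w 0 u) 1 u) *
          P (Function.update (Function.update w 0 v) 1 v) ≤
        (P (Function.update (Function.update w 0 u) 1 v)) ^ 2)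

include hsub hsymm hpos hAF in
lemma afF_main : ∀ m, 2 ≤ m → ∀ t : List V, t.length + m = n + 2 →
    (∀ x ∈ t, x ∈ Cp) → ∀ g : Fin m → V, (∀ i, g i ∈ Cp) →
    ∏ i, afF n P (List.replicate m (g i) ++ t) ≤ afF n P (List.ofFn g ++ t) ^ m := by
  intro m hm
  induction m, hm using Nat.le_induction with
  | base =>
    intro t ht htmem g hg
    rw [Fin.prod_univ_two]
    have e : List.ofFn g = [g 0, g 1] := by simp [List.ofFn_succ]
    rw [e]
    exact afF_AF n P hAF (g 0) (g 1) (hg 0) (hg 1) t (by omega) htmem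
  | succ m hm ih =>
    intro t ht htmem g hg
    have htmem' : ∀ x ∈ g (Fin.last m) :: t, x ∈ Cp := by
      intro x hx
      rcases List.mem_cons.1 hx with rfl | hx
      · exact hg _
      · exact htmem _ hx
    have hIH := ih (g (Fin.last m) :: t) (by simp; omega) htmem'
      (fun i => g i.castSucc) (fun i => hg _)
    have hA_eq : afF n P (List.ofFn (fun i : Fin m => g i.castSucc) ++ g (Fin.last m) :: t)
        = afF n P (List.ofFn g ++ t) := by
      congr 1
      rw [List.ofFn_succ' g]
      simp [List.concat_eq_append]
    rw [hA_eq] at hIH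
    -- memberships
    have hrepmem : ∀ (j : ℕ) (x : V), x ∈ Cp → ∀ z ∈ List.replicate j x ++ t, z ∈ Cp := by
      intro j x hx z hz
      rcases List.mem_append.1 hz with hz | hz
      · rwa [List.eq_of_mem_replicate hz]
      · exact htmem _ hz
    have hrepmem' : ∀ (x : V), x ∈ Cp →
        ∀ z ∈ List.replicate m x ++ g (Fin.last m) :: t, z ∈ Cp := by
      intro x hx z hz
      rcases List.mem_append.1 hz with hz | hz
      · rwa [List.eq_of_mem_replicate hz]
      · exact htmem' _ hz
    have ha_pos : ∀ i : Fin m, 0 < afF n P (List.replicate (m + 1) (g i.castSucc) ++ t) :=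
      fun i => afF_pos n P hpos _ (by simp; omega) (hrepmem _ _ (hg _))
    have haL_pos : 0 < afF n P (List.replicate (m + 1) (g (Fin.last m)) ++ t) :=
      afF_pos n P hpos _ (by simp; omega) (hrepmem _ _ (hg _))
    have hc_pos : ∀ i : Fin m,
        0 < afF n P (List.replicate m (g i.castSucc) ++ g (Fin.last m) :: t) :=
      fun i => afF_pos n P hpos _ (by simp; omega) (hrepmem' _ (hg _))
    have hA_pos : 0 < afF n P (List.ofFn g ++ t) := by
      refine afF_pos n P hpos _ (by simp; omega) ?_
      intro z hz
      rcases List.mem_append.1 hz with hz | hz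
      · rw [List.mem_ofFn] at hz
        obtain ⟨i, rfl⟩ := hz
        exact hg _
      · exact htmem _ hz
    have key : ∀ i : Fin m,
        afF n P (List.replicate (m + 1) (g i.castSucc) ++ t) ^ m *
          afF n P (List.replicate (m + 1) (g (Fin.last m)) ++ t) ≤
        afF n P (List.replicate m (g i.castSucc) ++ g (Fin.last m) :: t) ^ (m + 1) := by
      intro i
      have h := afF_chain hsub n P hsymm hpos hAF (m + 1) (by omega) (g i.castSucc)
        (g (Fin.last m)) (hg _) (hg _) t (by omega) htmem
      simpa using h
    rw [Fin.prod_univ_castSucc]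
    refine le_of_pow_le_pow_left₀ (show m ≠ 0 by omega)
      (pow_nonneg hA_pos.le _) ?_
    have eprod :
        ∏ i : Fin m, (afF n P (List.replicate (m + 1) (g i.castSucc) ++ t) ^ m *
            afF n P (List.replicate (m + 1) (g (Fin.last m)) ++ t)) =
          ((∏ i : Fin m, afF n P (List.replicate (m + 1) (g i.castSucc) ++ t)) *
            afF n P (List.replicate (m + 1) (g (Fin.last m)) ++ t)) ^ m := by
      rw [Finset.prod_mul_distrib, Finset.prod_pow, Finset.prod_const, Finset.card_univ,
        Fintype.card_fin, mul_pow]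
    calc ((∏ i : Fin m, afF n P (List.replicate (m + 1) (g i.castSucc) ++ t)) *
          afF n P (List.replicate (m + 1) (g (Fin.last m)) ++ t)) ^ m
        = ∏ i : Fin m, (afF n P (List.replicate (m + 1) (g i.castSucc) ++ t) ^ m *
            afF n P (List.replicate (m + 1) (g (Fin.last m)) ++ t)) := eprod.symm
      _ ≤ ∏ i : Fin m,
            afF n P (List.replicate m (g i.castSucc) ++ g (Fin.last m) :: t) ^ (m + 1) :=
          Finset.prod_le_prod
            (fun i _ => mul_nonneg (pow_nonneg (ha_pos i).le _) haL_pos.le)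
            (fun i _ => key i)
      _ = (∏ i : Fin m,
            afF n P (List.replicate m (g i.castSucc) ++ g (Fin.last m) :: t)) ^ (m + 1) :=
          Finset.prod_pow _ _ _
      _ ≤ (afF n P (List.ofFn g ++ t) ^ m) ^ (m + 1) :=
          pow_le_pow_left₀ (Finset.prod_nonneg fun i _ => (hc_pos i).le) hIH _
      _ = (afF n P (List.ofFn g ++ t) ^ (m + 1)) ^ m := by
          rw [← pow_mul, ← pow_mul, Nat.mul_comm]
end AF2

/-- abstract induction form of the higher Alexandrov–Fenchel inequality.
`P` is a symmetric function of `n` (`= n₀+2 ≥ 2`) arguments from a convex cone `C`,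
multilinear under nonnegative combinations, positive when all arguments lie in a subcone
`C⁺` (closed under the cone operations), and satisfying the quadratic AF inequality in its
first two slots for arguments from `C⁺`. Then for `2 ≤ m ≤ n` and `γ₁,…,γₙ ∈ C⁺`,
`P(γ₁,…,γₙ)^m ≥ ∏_{i=1}^m P(γᵢ[m], γ_{m+1},…,γₙ)`. -/
theorem abstract_af_higher {V : Type*} [AddCommGroup V] [Module ℝ V]
    (C Cp : Set V) (hsub : Cp ⊆ C)
    (hC_add : ∀ u ∈ C, ∀ v ∈ C, u + v ∈ C)
    (hC_smul : ∀ (a : ℝ), 0 ≤ a → ∀ u ∈ C, a • u ∈ C)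
    (hCp_add : ∀ u ∈ Cp, ∀ v ∈ Cp, u + v ∈ Cp)
    (hCp_smul : ∀ (a : ℝ), 0 < a → ∀ u ∈ Cp, a • u ∈ Cp)
    (n : ℕ) (P : (Fin (n + 2) → V) → ℝ)
    (hsymm : ∀ (σ : Equiv.Perm (Fin (n + 2))) (u : Fin (n + 2) → V),
      (∀ k, u k ∈ C) → P (u ∘ σ) = P u)
    (hmul : ∀ (u : Fin (n + 2) → V), (∀ k, u k ∈ C) → ∀ (i : Fin (n + 2)) (a b : ℝ),
      0 ≤ a → 0 ≤ b → ∀ x ∈ C, ∀ y ∈ C,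
        P (Function.update u i (a • x + b • y)) =
          a * P (Function.update u i x) + b * P (Function.update u i y))
    (hpos : ∀ u : Fin (n + 2) → V, (∀ k, u k ∈ Cp) → 0 < P u)
    (hAF : ∀ (w : Fin (n + 2) → V), (∀ k, w k ∈ Cp) → ∀ u ∈ Cp, ∀ v ∈ Cp,
      P (Function.update (Function.update w 0 u) 1 u) *
          P (Function.update (Function.update w 0 v) 1 v) ≤
        (P (Function.update (Function.update w 0 u) 1 v)) ^ 2) :
    ∀ (m : ℕ) (_ : 2 ≤ m) (hmn : m ≤ n + 2) (γ : Fin (n + 2) → V), (∀ k, γ k ∈ Cp) →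
      (∏ i : Fin m, P fun k => if (k : ℕ) < m then γ (Fin.castLE hmn i) else γ k) ≤
        P γ ^ m := by
  intro m hm2 hmn γ hγ
  classical
  set t : List V := List.ofFn (fun j : Fin (n + 2 - m) => γ ⟨m + (j : ℕ), by omega⟩)
    with ht_def
  have htlen : t.length = n + 2 - m := by simp [ht_def]
  have htmem : ∀ x ∈ t, x ∈ Cp := by
    intro x hx
    rw [ht_def, List.mem_ofFn] at hx
    obtain ⟨j, rfl⟩ := hx
    exact hγ _
  have htail : ∀ k : Fin (n + 2), ¬ (k : ℕ) < m → t.getD ((k : ℕ) - m) 0 = γ k := by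
    intro k hk
    have hlt : (k : ℕ) - m < t.length := by rw [htlen]; omega
    rw [List.getD_eq_getElem _ _ hlt]
    simp only [ht_def, List.getElem_ofFn]
    exact congrArg γ (Fin.ext (by simp; omega))
  have e1 : afF n P (List.ofFn (fun i : Fin m => γ (Fin.castLE hmn i)) ++ t) = P γ := by
    show P _ = P γ
    congr 1
    funext k
    by_cases hk : (k : ℕ) < m
    · rw [List.getD_append _ _ _ _ (by simpa using hk)]
      rw [List.getD_eq_getElem _ _ (by simpa using hk), List.getElem_ofFn]
      exact congrArg γ (Fin.ext rfl)
    · rw [List.getD_append_right _ _ _ _ (by simp; omega)]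
      simpa using htail k hk
  have e2 : ∀ i : Fin m,
      afF n P (List.replicate m (γ (Fin.castLE hmn i)) ++ t) =
        P (fun k => if (k : ℕ) < m then γ (Fin.castLE hmn i) else γ k) := by
    intro i
    show P _ = P _
    congr 1
    funext k
    by_cases hk : (k : ℕ) < m
    · rw [List.getD_append _ _ _ _ (by simpa using hk)]
      rw [List.getD_eq_getElem _ _ (by simpa using hk), List.getElem_replicate]
      simp [hk]
    · rw [List.getD_append_right _ _ _ _ (by simp; omega)]
      rw [if_neg hk]
      simpa using htail k hk
  have hmain := afF_main hsub n P hsymm hpos hAF m hm2 t (by omega) htmem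
    (fun i => γ (Fin.castLE hmn i)) (fun i => hγ _)
  calc (∏ i : Fin m, P fun k => if (k : ℕ) < m then γ (Fin.castLE hmn i) else γ k)
      = ∏ i : Fin m, afF n P (List.replicate m (γ (Fin.castLE hmn i)) ++ t) :=
        Finset.prod_congr rfl (fun i _ => (e2 i).symm)
    _ ≤ afF n P (List.ofFn (fun i : Fin m => γ (Fin.castLE hmn i)) ++ t) ^ m := hmain
    _ = P γ ^ m := by rw [e1]
end

section
/- Let a, b, c, d, e, f be real numbers with the matrix interpretation d₀₀ = a, d₀₁ = b, d₀₂ = c, d₁₁ = d, d₁₂ = e, d₂₂ = f arising as Gram-type values d_{ij} = f(uᵢ,uⱼ) of a symmetric nonnegatively-bilinear function on a cone satisfying f(u,v)² ≥ f(u,u)f(v,v). Then (d₀₁² − d₀₀d₁₁)(d₀₂² − d₀₀d₂₂) ≥ (d₀₁d₀₂ − d₀₀d₁₂)². -/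
set_option maxHeartbeats 1000000

private lemma af_key_transfer (a b c d e g s t u v : ℝ) (hu : a*s + b = u) (hv : a*t + c = v)
    (K : (d + 2*s*b + s^2*a) * (g + 2*t*c + t^2*a) ≤ (e + s*c + t*b + s*t*a)^2) :
    (u^2 - (b^2 - a*d)) * (v^2 - (c^2 - a*g)) ≤ (u*v - (b*c - a*e))^2 := by
  subst hu; subst hv
  nlinarith [K, sq_nonneg a, mul_le_mul_of_nonneg_left K (sq_nonneg a)]

private lemma af_quad_contra (M11 M12 M22 ε lam : ℝ) (h22 : 0 ≤ M22)
    (hDpos : 0 < M12^2 - M11*M22)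
    (hlam2 : M11*ε^2 + (M12^2 - M11*M22) + 1 ≤ 2*lam*ε*(M12^2 - M11*M22))
    (hlam0 : 0 ≤ lam)
    (K2 : ((lam*M12)^2 - M11) * ((lam*M22 + ε)^2 - M22) ≤ ((lam*M12)*(lam*M22 + ε) - M12)^2) :
    False := by
  nlinarith [K2, hlam2, mul_nonneg (mul_nonneg (mul_nonneg hlam0 hlam0) h22) hDpos.le]

private lemma af_quad_contra_neg (M11 M12 M22 ε lam : ℝ) (h22 : 0 ≤ M22)
    (hDpos : 0 < M12^2 - M11*M22)
    (hlam2 : M11*ε^2 + (M12^2 - M11*M22) + 1 ≤ 2*lam*ε*(M12^2 - M11*M22))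
    (hlam0 : 0 ≤ lam)
    (K2 : ((-(lam*M12))^2 - M11) * ((-(lam*M22 + ε))^2 - M22) ≤
      ((-(lam*M12))*(-(lam*M22 + ε)) - M12)^2) :
    False := by
  nlinarith [K2, hlam2, mul_nonneg (mul_nonneg (mul_nonneg hlam0 hlam0) h22) hDpos.le]

private lemma af_alg_ne (a b c d e g : ℝ)
    (Hk : ∀ s t : ℝ, 0 ≤ s → 0 ≤ t →
      (d + 2*s*b + s^2*a) * (g + 2*t*c + t^2*a) ≤ (e + s*c + t*b + s*t*a)^2)
    (ha : a ≠ 0) (h11 : 0 ≤ b^2 - a*d) (h22 : 0 ≤ c^2 - a*g) (hm : 0 < b*c - a*e)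
    (hcon : (b^2 - a*d)*(c^2 - a*g) < (b*c - a*e)^2) : False := by
  have hD : 0 < (b*c - a*e)^2 - (b^2 - a*d)*(c^2 - a*g) := by linarith
  have hε : (0:ℝ) < |c| + 1 := by positivity
  obtain ⟨lam, hlamd⟩ : ∃ l : ℝ, l = max ((|b|+1)/(b*c - a*e))
      (((b^2 - a*d)*(|c|+1)^2 + ((b*c - a*e)^2 - (b^2 - a*d)*(c^2 - a*g)) + 1)
        / (2*(|c|+1)*((b*c - a*e)^2 - (b^2 - a*d)*(c^2 - a*g)))) := ⟨_, rfl⟩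
  have h2εD : 0 < 2*(|c|+1)*((b*c - a*e)^2 - (b^2 - a*d)*(c^2 - a*g)) := by positivity
  have hlam1 : |b| + 1 ≤ lam * (b*c - a*e) := by
    rw [hlamd]
    exact (div_le_iff₀ hm).mp (le_max_left _ _)
  have hlam2 : (b^2 - a*d)*(|c|+1)^2 + ((b*c - a*e)^2 - (b^2 - a*d)*(c^2 - a*g)) + 1 ≤
      2*lam*(|c|+1)*((b*c - a*e)^2 - (b^2 - a*d)*(c^2 - a*g)) := by
    have h := (div_le_iff₀ h2εD).mp (le_max_right ((|b|+1)/(b*c - a*e))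
      (((b^2 - a*d)*(|c|+1)^2 + ((b*c - a*e)^2 - (b^2 - a*d)*(c^2 - a*g)) + 1)
        / (2*(|c|+1)*((b*c - a*e)^2 - (b^2 - a*d)*(c^2 - a*g)))))
    rw [← hlamd] at h
    nlinarith [h]
  have hlam0 : 0 ≤ lam := by
    nlinarith [hlam1, abs_nonneg b, hm]
  rcases ha.lt_or_gt with haneg | hapos
  · -- a < 0
    obtain ⟨u, hud⟩ : ∃ x : ℝ, x = -(lam*(b*c - a*e)) := ⟨_, rfl⟩
    obtain ⟨v, hvd⟩ : ∃ x : ℝ, x = -(lam*(c^2 - a*g) + (|c|+1)) := ⟨_, rfl⟩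
    have hub : u - b ≤ 0 := by
      rw [hud]; nlinarith [hlam1, neg_abs_le b]
    have hvc : v - c ≤ 0 := by
      rw [hvd]; nlinarith [mul_nonneg hlam0 h22, neg_abs_le c]
    have hs : 0 ≤ (u - b)/a := div_nonneg_of_nonpos hub haneg.le
    have ht : 0 ≤ (v - c)/a := div_nonneg_of_nonpos hvc haneg.le
    have hu : a*((u - b)/a) + b = u := by field_simp; ring
    have hv : a*((v - c)/a) + c = v := by field_simp; ring
    have K2 := af_key_transfer a b c d e g _ _ u v hu hv (Hk _ _ hs ht)
    rw [hud, hvd] at K2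
    exact af_quad_contra_neg (b^2 - a*d) (b*c - a*e) (c^2 - a*g) (|c|+1) lam h22 hD hlam2 hlam0 K2
  · -- 0 < a
    obtain ⟨u, hud⟩ : ∃ x : ℝ, x = lam*(b*c - a*e) := ⟨_, rfl⟩
    obtain ⟨v, hvd⟩ : ∃ x : ℝ, x = lam*(c^2 - a*g) + (|c|+1) := ⟨_, rfl⟩
    have hub : 0 ≤ u - b := by
      rw [hud]; nlinarith [hlam1, le_abs_self b]
    have hvc : 0 ≤ v - c := by
      rw [hvd]; nlinarith [mul_nonneg hlam0 h22, le_abs_self c]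
    have hs : 0 ≤ (u - b)/a := div_nonneg hub hapos.le
    have ht : 0 ≤ (v - c)/a := div_nonneg hvc hapos.le
    have hu : a*((u - b)/a) + b = u := by field_simp; ring
    have hv : a*((v - c)/a) + c = v := by field_simp; ring
    have K2 := af_key_transfer a b c d e g _ _ u v hu hv (Hk _ _ hs ht)
    rw [hud, hvd] at K2
    exact af_quad_contra (b^2 - a*d) (b*c - a*e) (c^2 - a*g) (|c|+1) lam h22 hD hlam2 hlam0 K2

private lemma af_alg (a b c d e g : ℝ)
    (Hq : ∀ s t : ℝ, 0 ≤ s → 0 ≤ t →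
      a * (s^2*d + 2*s*t*e + t^2*g) ≤ (s*b + t*c)^2)
    (Hk : ∀ s t : ℝ, 0 ≤ s → 0 ≤ t →
      (d + 2*s*b + s^2*a) * (g + 2*t*c + t^2*a) ≤ (e + s*c + t*b + s*t*a)^2) :
    (b*c - a*e)^2 ≤ (b^2 - a*d)*(c^2 - a*g) := by
  have h11 : 0 ≤ b^2 - a*d := by nlinarith [Hq 1 0 zero_le_one le_rfl]
  have h22 : 0 ≤ c^2 - a*g := by nlinarith [Hq 0 1 le_rfl zero_le_one]
  rcases le_or_gt (b*c - a*e) 0 with hm | hm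
  · rcases eq_or_lt_of_le h22 with h2z | h2p
    · -- 0 = c^2 - a*g
      have hq := Hq (-(b*c - a*e)) (b^2 - a*d + 1) (by linarith) (by linarith)
      have hz : b*c - a*e = 0 := by
        nlinarith [hq, h11, mul_nonneg (sq_nonneg (b*c - a*e)) h11, h2z]
      nlinarith [hz, h2z, h11]
    · nlinarith [Hq (c^2 - a*g) (-(b*c - a*e)) h22 (by linarith), h2p]
  · by_contra hcon
    push_neg at hcon
    rcases eq_or_ne a 0 with ha | ha
    · rw [ha] at hcon; nlinarith [hcon]
    · exact af_alg_ne a b c d e g Hk ha h11 h22 hm hcon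

/-- the `r = 2` case of the determinantal generalization: for `u₀, u₁, u₂`
in a convex cone `C` and `f` symmetric, bilinear under nonnegative combinations, and
satisfying the Alexandrov–Fenchel type inequality, with `dᵢⱼ = f(uᵢ,uⱼ)` one has
`(d₀₁² − d₀₀d₁₁)(d₀₂² − d₀₀d₂₂) ≥ (d₀₁d₀₂ − d₀₀d₁₂)²`. -/
theorem af_r_two_case {V : Type*} [AddCommGroup V] [Module ℝ V] (C : Set V)
    (hC_add : ∀ u ∈ C, ∀ v ∈ C, u + v ∈ C)
    (hC_smul : ∀ (a : ℝ), 0 ≤ a → ∀ u ∈ C, a • u ∈ C)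
    (f : V → V → ℝ)
    (hsymm : ∀ u ∈ C, ∀ v ∈ C, f u v = f v u)
    (hbilin : ∀ (a₁ a₂ b₁ b₂ : ℝ), 0 ≤ a₁ → 0 ≤ a₂ → 0 ≤ b₁ → 0 ≤ b₂ →
      ∀ u₁ ∈ C, ∀ u₂ ∈ C, ∀ v₁ ∈ C, ∀ v₂ ∈ C,
        f (a₁ • u₁ + a₂ • u₂) (b₁ • v₁ + b₂ • v₂) =
          a₁ * b₁ * f u₁ v₁ + a₁ * b₂ * f u₁ v₂ + a₂ * b₁ * f u₂ v₁ + a₂ * b₂ * f u₂ v₂)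
    (hAF : ∀ u ∈ C, ∀ v ∈ C, f u u * f v v ≤ (f u v) ^ 2)
    (u₀ u₁ u₂ : V) (h₀ : u₀ ∈ C) (h₁ : u₁ ∈ C) (h₂ : u₂ ∈ C) :
    (f u₀ u₁ * f u₀ u₂ - f u₀ u₀ * f u₁ u₂) ^ 2 ≤
      ((f u₀ u₁) ^ 2 - f u₀ u₀ * f u₁ u₁) * ((f u₀ u₂) ^ 2 - f u₀ u₀ * f u₂ u₂) := by
  have hmem : ∀ (s t : ℝ), 0 ≤ s → 0 ≤ t → ∀ x ∈ C, ∀ y ∈ C, s • x + t • y ∈ C :=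
    fun s t hs ht x hx y hy => hC_add _ (hC_smul s hs x hx) _ (hC_smul t ht y hy)
  have Hq : ∀ s t : ℝ, 0 ≤ s → 0 ≤ t →
      f u₀ u₀ * (s^2 * f u₁ u₁ + 2*s*t * f u₁ u₂ + t^2 * f u₂ u₂) ≤
        (s * f u₀ u₁ + t * f u₀ u₂)^2 := by
    intro s t hs ht
    have hw : s • u₁ + t • u₂ ∈ C := hmem s t hs ht u₁ h₁ u₂ h₂
    have hval1 := hbilin 1 0 s t zero_le_one le_rfl hs ht u₀ h₀ u₀ h₀ u₁ h₁ u₂ h₂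
    have hval2 := hbilin s t s t hs ht hs ht u₁ h₁ u₂ h₂ u₁ h₁ u₂ h₂
    rw [hsymm u₂ h₂ u₁ h₁] at hval2
    simp only [one_smul, zero_smul, add_zero, one_mul, zero_mul] at hval1
    have hAFi := hAF u₀ h₀ _ hw
    rw [hval1, hval2] at hAFi
    nlinarith [hAFi]
  have Hk : ∀ s t : ℝ, 0 ≤ s → 0 ≤ t →
      (f u₁ u₁ + 2*s * f u₀ u₁ + s^2 * f u₀ u₀) * (f u₂ u₂ + 2*t * f u₀ u₂ + t^2 * f u₀ u₀) ≤
        (f u₁ u₂ + s * f u₀ u₂ + t * f u₀ u₁ + s*t * f u₀ u₀)^2 := by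
    intro s t hs ht
    have hx : (1:ℝ) • u₁ + s • u₀ ∈ C := hmem 1 s zero_le_one hs u₁ h₁ u₀ h₀
    have hy : (1:ℝ) • u₂ + t • u₀ ∈ C := hmem 1 t zero_le_one ht u₂ h₂ u₀ h₀
    have fxx := hbilin 1 s 1 s zero_le_one hs zero_le_one hs u₁ h₁ u₀ h₀ u₁ h₁ u₀ h₀
    have fyy := hbilin 1 t 1 t zero_le_one ht zero_le_one ht u₂ h₂ u₀ h₀ u₂ h₂ u₀ h₀
    have fxy := hbilin 1 s 1 t zero_le_one hs zero_le_one ht u₁ h₁ u₀ h₀ u₂ h₂ u₀ h₀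
    rw [hsymm u₁ h₁ u₀ h₀] at fxx fxy
    rw [hsymm u₂ h₂ u₀ h₀] at fyy
    have hAFi := hAF _ hx _ hy
    rw [fxx, fyy, fxy] at hAFi
    nlinarith [hAFi]
  exact af_alg (f u₀ u₀) (f u₀ u₁) (f u₀ u₂) (f u₁ u₁) (f u₁ u₂) (f u₂ u₂) Hq Hk
end

section
/- Abstract equality-propagation: let C⁺ be a subcone of a convex cone C and P : Cⁿ → ℝ a symmetric function, multilinear under nonnegative combinations, positive on (C⁺)ⁿ, satisfying for all u,v,w₃,…,wₙ ∈ C⁺ both the Alexandrov–Fenchel inequality P(u,v,w₃,…,wₙ)² ≥ P(u,u,w₃,…,wₙ)P(v,v,w₃,…,wₙ). Suppose moreover the m−1 case of the product inequality holds with a characterized equality condition. If γ₁,…,γₙ ∈ C⁺ satisfy P(γ₁,…,γ_m,γ_{m+1},…,γₙ)^m = ∏_{i=1}^m P(γᵢ[m],γ_{m+1},…,γₙ), then for every 1 ≤ j ≤ m equality holds in P(γ₁,…,γ_m,γ_{m+1},…,γₙ)^{m−1} = ∏_{1≤i≤m, i≠j} P(γᵢ^{m−1}γⱼ,γ_{m+1},…,γₙ)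 (with the notation γᵢ^{m−1}γⱼ meaning γᵢ repeated m−1 times and γⱼ once). -/
open Finset

noncomputable def natPerm {N : ℕ} (F : ℕ → ℕ) (hF : ∀ x, x < N → F x < N)
    (hinj : ∀ x, x < N → ∀ y, y < N → F x = F y → x = y) : Equiv.Perm (Fin N) :=
  Equiv.ofBijective (fun k => ⟨F k, hF k k.isLt⟩)
    (Finite.injective_iff_bijective.mp fun a b h =>
      Fin.ext (hinj a a.isLt b b.isLt (congrArg Fin.val h)))

lemma natPerm_val {N : ℕ} (F : ℕ → ℕ) (hF : ∀ x, x < N → F x < N)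
    (hinj : ∀ x, x < N → ∀ y, y < N → F x = F y → x = y) (k : Fin N) :
    ((natPerm F hF hinj k : Fin N) : ℕ) = F k := rfl

def cseq {V : Type*} (n m : ℕ) (γ : Fin (n + 2) → V) (gi gj : V) (t : ℕ) : Fin (n + 2) → V :=
  fun k => if (k : ℕ) < m - t then gi else if (k : ℕ) < m then gj else γ k

lemma cseq_apply {V : Type*} (n m : ℕ) (γ : Fin (n + 2) → V) (gi gj : V) (t : ℕ) (k : Fin (n+2)) :
    cseq n m γ gi gj t k = if (k : ℕ) < m - t then gi else if (k : ℕ) < m then gj else γ k := rfl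

section
variable {V : Type*} (C Cp : Set V) (hsub : Cp ⊆ C) (n : ℕ) (P : (Fin (n + 2) → V) → ℝ)

lemma genAF (hsub : Cp ⊆ C)
    (hsymm : ∀ (σ : Equiv.Perm (Fin (n + 2))) (u : Fin (n + 2) → V),
      (∀ k, u k ∈ C) → P (u ∘ σ) = P u)
    (hAF : ∀ (w : Fin (n + 2) → V), (∀ k, w k ∈ Cp) → ∀ u ∈ Cp, ∀ v ∈ Cp,
      P (Function.update (Function.update w 0 u) 1 u) *
          P (Function.update (Function.update w 0 v) 1 v) ≤
        (P (Function.update (Function.update w 0 u) 1 v)) ^ 2)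
    (w : Fin (n + 2) → V) (hw : ∀ k, w k ∈ Cp) (p q : Fin (n + 2)) (hpq : p ≠ q)
    (u : V) (hu : u ∈ Cp) (v : V) (hv : v ∈ Cp) :
    P (Function.update (Function.update w p u) q u) *
        P (Function.update (Function.update w p v) q v) ≤
      (P (Function.update (Function.update w p u) q v)) ^ 2 := by
  classical
  set σ1 : Equiv.Perm (Fin (n + 2)) := Equiv.swap 0 p with hσ1def
  have hq0 : σ1 q ≠ 0 := by
    intro h
    apply hpq
    have h2 : σ1 (σ1 q) = σ1 0 := by rw [h]
    rw [Equiv.swap_apply_self, Equiv.swap_apply_left] at h2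
    exact h2.symm
  set σ2 : Equiv.Perm (Fin (n + 2)) := Equiv.swap 1 (σ1 q) with hσ2def
  set σ : Equiv.Perm (Fin (n + 2)) := σ2.trans σ1 with hσdef
  have hσ0 : σ 0 = p := by
    have h20 : σ2 0 = 0 := Equiv.swap_apply_of_ne_of_ne (by simp) (Ne.symm hq0)
    show σ1 (σ2 0) = p
    rw [h20]; exact Equiv.swap_apply_left 0 p
  have hσ1' : σ 1 = q := by
    show σ1 (σ2 1) = q
    have : σ2 1 = σ1 q := Equiv.swap_apply_left 1 (σ1 q)
    rw [this, Equiv.swap_apply_self]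
  have key : ∀ x y : V,
      Function.update (Function.update (w ∘ σ) 0 x) 1 y =
        (Function.update (Function.update w p x) q y) ∘ σ := by
    intro x y
    funext k
    have c1 : (σ k = q) ↔ (k = 1) := by rw [← hσ1']; exact σ.injective.eq_iff
    have c0 : (σ k = p) ↔ (k = 0) := by rw [← hσ0]; exact σ.injective.eq_iff
    simp only [Function.comp_apply, Function.update_apply, c1, c0]
  have hmem : ∀ x ∈ Cp, ∀ y ∈ Cp, ∀ k, (Function.update (Function.update w p x) q y) k ∈ C := by
    intro x hx y hy k
    simp only [Function.update_apply]
    split_ifs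
    · exact hsub hy
    · exact hsub hx
    · exact hsub (hw k)
  have hwσ : ∀ k, (w ∘ σ) k ∈ Cp := fun k => hw _
  have h := hAF (w ∘ σ) hwσ u hu v hv
  rwa [key u u, key v v, key u v, hsymm σ _ (hmem u hu u hu), hsymm σ _ (hmem v hv v hv),
    hsymm σ _ (hmem u hu v hv)] at h

lemma logconcave_chain (a : ℕ → ℝ) (m : ℕ)
    (hpos : ∀ t, t ≤ m → 0 < a t)
    (hlc : ∀ t, t + 2 ≤ m → a t * a (t + 2) ≤ a (t + 1) ^ 2) :
    ∀ t, t + 1 ≤ m → a 0 * a (t + 1) ≤ a 1 * a t := by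
  intro t
  induction t with
  | zero => intro _; nlinarith [hpos 0 (by omega), hpos 1 (by omega)]
  | succ t ih =>
    intro h
    have h1 := ih (by omega)
    have h2 := hlc t (by omega)
    have p0 := hpos t (by omega)
    have p1 := hpos (t + 1) (by omega)
    have p2 := hpos (t + 2) (by omega)
    have pa0 := hpos 0 (by omega)
    have pa1 := hpos 1 (by omega)
    have key : (a 0 * a (t + 2)) * (a t * a (t + 1)) ≤ (a 1 * a (t + 1)) * (a t * a (t + 1)) := by
      nlinarith [mul_le_mul_of_nonneg_right h1 p2.le, mul_le_mul_of_nonneg_left h2 pa0.le,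
        mul_le_mul_of_nonneg_left h2 (mul_pos pa1 p1).le]
    exact le_of_mul_le_mul_right key (mul_pos p0 p1)

lemma pair_step (hsub : Cp ⊆ C)
    (hsymm : ∀ (σ : Equiv.Perm (Fin (n + 2))) (u : Fin (n + 2) → V),
      (∀ k, u k ∈ C) → P (u ∘ σ) = P u)
    (hpos : ∀ u : Fin (n + 2) → V, (∀ k, u k ∈ Cp) → 0 < P u)
    (hAF : ∀ (w : Fin (n + 2) → V), (∀ k, w k ∈ Cp) → ∀ u ∈ Cp, ∀ v ∈ Cp,
      P (Function.update (Function.update w 0 u) 1 u) *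
          P (Function.update (Function.update w 0 v) 1 v) ≤
        (P (Function.update (Function.update w 0 u) 1 v)) ^ 2)
    (m : ℕ) (hm : 2 ≤ m) (hmn : m ≤ n + 2)
    (γ : Fin (n + 2) → V) (hγ : ∀ k, γ k ∈ Cp) (i j : Fin m) :
    (P fun k => if (k : ℕ) < m then γ (Fin.castLE hmn i) else γ k) *
      (P fun k => if (k : ℕ) < m then γ (Fin.castLE hmn j) else γ k) ≤
    (P fun k => if (k : ℕ) < m - 1 then γ (Fin.castLE hmn i)
        else if (k : ℕ) = m - 1 then γ (Fin.castLE hmn j) else γ k) *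
      (P fun k => if (k : ℕ) < m - 1 then γ (Fin.castLE hmn j)
        else if (k : ℕ) = m - 1 then γ (Fin.castLE hmn i) else γ k) := by
  classical
  set gi := γ (Fin.castLE hmn i) with hgi
  set gj := γ (Fin.castLE hmn j) with hgj
  have hgiCp : gi ∈ Cp := hγ _
  have hgjCp : gj ∈ Cp := hγ _
  have hcmem : ∀ t k, cseq n m γ gi gj t k ∈ Cp := by
    intro t k
    rw [cseq_apply]
    split_ifs
    · exact hgiCp
    · exact hgjCp
    · exact hγ k
  set a : ℕ → ℝ := fun t => P (cseq n m γ gi gj t) with ha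
  have hapos : ∀ t, t ≤ m → 0 < a t := fun t _ => hpos _ (hcmem t)
  -- log-concavity of a
  have hlc : ∀ t, t + 2 ≤ m → a t * a (t + 2) ≤ a (t + 1) ^ 2 := by
    intro t ht
    have hp1 : m - t - 2 < n + 2 := by omega
    have hq1 : m - t - 1 < n + 2 := by omega
    have hne : (⟨m - t - 2, hp1⟩ : Fin (n + 2)) ≠ ⟨m - t - 1, hq1⟩ := by
      intro h
      have := congrArg Fin.val h
      simp only at this
      omega
    have h := genAF C Cp n P hsub hsymm hAF (cseq n m γ gi gj (t + 1)) (hcmem (t + 1))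
      ⟨m - t - 2, hp1⟩ ⟨m - t - 1, hq1⟩ hne gi hgiCp gj hgjCp
    have e1 : Function.update (Function.update (cseq n m γ gi gj (t + 1)) ⟨m - t - 2, hp1⟩ gi)
        ⟨m - t - 1, hq1⟩ gi = cseq n m γ gi gj t := by
      funext k
      simp only [Function.update_apply, cseq_apply, Fin.ext_iff]
      split_ifs <;> first | rfl | omega
    have e2 : Function.update (Function.update (cseq n m γ gi gj (t + 1)) ⟨m - t - 2, hp1⟩ gj)
        ⟨m - t - 1, hq1⟩ gj = cseq n m γ gi gj (t + 2) := by
      funext k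
      simp only [Function.update_apply, cseq_apply, Fin.ext_iff]
      split_ifs <;> first | rfl | omega
    have e3 : Function.update (Function.update (cseq n m γ gi gj (t + 1)) ⟨m - t - 2, hp1⟩ gi)
        ⟨m - t - 1, hq1⟩ gj = cseq n m γ gi gj (t + 1) := by
      funext k
      simp only [Function.update_apply, cseq_apply, Fin.ext_iff]
      split_ifs <;> first | rfl | omega
    rw [e1, e2, e3] at h
    exact h
  -- endpoints identification
  have hA0 : (fun k : Fin (n+2) => if (k : ℕ) < m then gi else γ k) = cseq n m γ gi gj 0 := by
    funext k
    rw [cseq_apply]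
    split_ifs <;> first | rfl | omega
  have hAm : (fun k : Fin (n+2) => if (k : ℕ) < m then gj else γ k) = cseq n m γ gi gj m := by
    funext k
    rw [cseq_apply]
    split_ifs <;> first | rfl | omega
  have hB1 : (fun k : Fin (n+2) => if (k : ℕ) < m - 1 then gi
      else if (k : ℕ) = m - 1 then gj else γ k) = cseq n m γ gi gj 1 := by
    funext k
    rw [cseq_apply]
    split_ifs <;> first | rfl | omega
  -- the reversed one via a cyclic permutation
  have hFb : ∀ x, x < n + 2 → (if x = 0 then m - 1 else if x < m then x - 1 else x) < n + 2 := by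
    intro x hx; split_ifs <;> omega
  have hFinj : ∀ x, x < n + 2 → ∀ y, y < n + 2 →
      (if x = 0 then m - 1 else if x < m then x - 1 else x) =
        (if y = 0 then m - 1 else if y < m then y - 1 else y) → x = y := by
    intro x hx y hy h; split_ifs at h <;> omega
  set τ : Equiv.Perm (Fin (n + 2)) :=
    natPerm (fun x => if x = 0 then m - 1 else if x < m then x - 1 else x) hFb hFinj with hτ
  have hτval : ∀ k : Fin (n + 2),
      ((τ k : Fin (n + 2)) : ℕ) = if (k : ℕ) = 0 then m - 1 else if (k : ℕ) < m then (k : ℕ) - 1 else (k : ℕ) :=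
    fun k => rfl
  have hBm1 : ((fun k : Fin (n+2) => if (k : ℕ) < m - 1 then gj
      else if (k : ℕ) = m - 1 then gi else γ k) ∘ τ) = cseq n m γ gi gj (m - 1) := by
    funext k
    simp only [Function.comp_apply, cseq_apply]
    rcases eq_or_ne ((k : ℕ)) 0 with h0 | h0
    · have hv : ((τ k : Fin (n+2)) : ℕ) = m - 1 := by rw [hτval, if_pos h0]
      rw [hv]
      rw [if_neg (lt_irrefl _), if_pos rfl, if_pos (by omega)]
    · rcases Nat.lt_or_ge (k : ℕ) m with hk | hk
      · have hv : ((τ k : Fin (n+2)) : ℕ) = (k : ℕ) - 1 := by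
          rw [hτval, if_neg h0, if_pos hk]
        rw [hv]
        rw [if_pos (by omega), if_neg (by omega), if_pos hk]
      · have hv : ((τ k : Fin (n+2)) : ℕ) = (k : ℕ) := by
          rw [hτval, if_neg h0, if_neg (by omega)]
        have hτk : τ k = k := Fin.ext hv
        rw [hτk]
        rw [if_neg (by omega), if_neg (by omega), if_neg (by omega), if_neg (by omega)]
  have hmemBji : ∀ k, ((fun k : Fin (n+2) => if (k : ℕ) < m - 1 then gj
      else if (k : ℕ) = m - 1 then gi else γ k) k) ∈ C := by
    intro k
    simp only
    split_ifs
    · exact hsub hgjCp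
    · exact hsub hgiCp
    · exact hsub (hγ k)
  have hPBji : a (m - 1) = P (fun k : Fin (n+2) => if (k : ℕ) < m - 1 then gj
      else if (k : ℕ) = m - 1 then gi else γ k) := by
    rw [ha]
    simp only
    rw [← hBm1]
    exact hsymm τ _ hmemBji
  -- conclude
  have hchain := logconcave_chain a m hapos hlc (m - 1) (by omega)
  have hm1 : m - 1 + 1 = m := by omega
  rw [hm1] at hchain
  rw [hA0, hAm, hB1]
  calc P (cseq n m γ gi gj 0) * P (cseq n m γ gi gj m) = a 0 * a m := by rw [ha]
    _ ≤ a 1 * a (m - 1) := hchain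
    _ = P (cseq n m γ gi gj 1) * P (fun k : Fin (n+2) => if (k : ℕ) < m - 1 then gj
        else if (k : ℕ) = m - 1 then gi else γ k) := by rw [← hPBji, ha]

end

lemma prod13 {V : Type*} (C Cp : Set V) (hsub : Cp ⊆ C) (n : ℕ) (P : (Fin (n + 2) → V) → ℝ)
    (hsymm : ∀ (σ : Equiv.Perm (Fin (n + 2))) (u : Fin (n + 2) → V),
      (∀ k, u k ∈ C) → P (u ∘ σ) = P u)
    (m : ℕ) (hm : 2 ≤ m) (hmn : m ≤ n + 2)
    (hInd : ∀ δ : Fin (n + 2) → V, (∀ k, δ k ∈ Cp) →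
      (∏ i : Fin (m - 1), P fun k =>
        if (k : ℕ) < m - 1 then δ (Fin.castLE ((Nat.sub_le m 1).trans hmn) i) else δ k) ≤
        P δ ^ (m - 1))
    (γ : Fin (n + 2) → V) (hγ : ∀ k, γ k ∈ Cp) (j : Fin m) :
    (∏ i ∈ Finset.univ.filter (fun i : Fin m => i ≠ j),
        P fun k => if (k : ℕ) < m - 1 then γ (Fin.castLE hmn i)
          else if (k : ℕ) = m - 1 then γ (Fin.castLE hmn j) else γ k) ≤ P γ ^ (m - 1) := by
  classical
  have hjlt : (j : ℕ) < m := j.isLt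
  set F : ℕ → ℕ := fun x => if x < m - 1 then (if x < (j : ℕ) then x else x + 1)
    else if x = m - 1 then (j : ℕ) else x with hF
  have hFb : ∀ x, x < n + 2 → F x < n + 2 := by
    intro x hx; rw [hF]; simp only; split_ifs <;> omega
  have hFinj : ∀ x, x < n + 2 → ∀ y, y < n + 2 → F x = F y → x = y := by
    intro x hx y hy h; rw [hF] at h; simp only at h; split_ifs at h <;> omega
  set σ : Equiv.Perm (Fin (n + 2)) := natPerm F hFb hFinj with hσ
  have hδmem : ∀ k, (γ ∘ ⇑σ) k ∈ Cp := fun k => hγ _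
  have h := hInd (γ ∘ ⇑σ) hδmem
  rw [hsymm σ γ (fun k => hsub (hγ k))] at h
  refine le_trans (le_of_eq ?_) h
  -- reindex the product
  refine Finset.prod_nbij' (fun i => if h' : (i : ℕ) < (j : ℕ) then ⟨(i : ℕ), by omega⟩
      else ⟨(i : ℕ) - 1, by have := i.isLt; omega⟩)
    (fun i => if h' : (i : ℕ) < (j : ℕ) then ⟨(i : ℕ), by have := i.isLt; omega⟩
      else ⟨(i : ℕ) + 1, by have := i.isLt; omega⟩) ?_ ?_ ?_ ?_ ?_
  · intro i _; exact Finset.mem_univ _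
  · intro i _
    simp only [Finset.mem_filter, Finset.mem_univ, true_and]
    split_ifs with h'
    · intro hcon
      have := congrArg Fin.val hcon
      simp only at this
      omega
    · intro hcon
      have := congrArg Fin.val hcon
      simp only at this
      have := i.isLt
      omega
  · intro i hi
    have hij : i ≠ j := (Finset.mem_filter.mp hi).2
    have hijv : (i : ℕ) ≠ (j : ℕ) := fun hc => hij (Fin.ext hc)
    have hlt := i.isLt
    apply Fin.ext
    simp only [apply_dite Fin.val, Fin.val_mk]
    split_ifs <;> omega
  · intro i _
    have hlt := i.isLt
    apply Fin.ext
    simp only [apply_dite Fin.val, Fin.val_mk]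
    split_ifs <;> omega
  · intro i hi
    have hij : i ≠ j := (Finset.mem_filter.mp hi).2
    have hijv : (i : ℕ) ≠ (j : ℕ) := fun hc => hij (Fin.ext hc)
    -- value of the image index
    have him : ∀ (x : Fin (m - 1)), ((Fin.castLE ((Nat.sub_le m 1).trans hmn) x : Fin (n+2)) : ℕ) = (x : ℕ) :=
      fun x => rfl
    congr 1
    funext k
    have hσval : ∀ z : Fin (n + 2), ((σ z : Fin (n+2)) : ℕ) = F (z : ℕ) := fun z => rfl
    by_cases hk : (k : ℕ) < m - 1
    · rw [if_pos hk, if_pos hk]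
      simp only [Function.comp_apply]
      apply congrArg γ
      apply Fin.ext
      rw [hσval]
      rw [hF]
      simp only [Fin.coe_castLE]
      by_cases h' : (i : ℕ) < (j : ℕ)
      · rw [dif_pos h']
        simp only
        rw [if_pos (by have := i.isLt; omega), if_pos (by omega)]
      · rw [dif_neg h']
        simp only
        rw [if_pos (by have := i.isLt; omega), if_neg (by omega)]
        have := i.isLt
        omega
    · rw [if_neg hk, if_neg hk]
      by_cases hk2 : (k : ℕ) = m - 1
      · rw [if_pos hk2]
        simp only [Function.comp_apply]
        apply congrArg γ
        apply Fin.ext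
        rw [hσval, hF]
        simp only [Fin.coe_castLE]
        rw [if_neg (by omega), if_pos hk2]
      · rw [if_neg hk2]
        simp only [Function.comp_apply]
        apply congrArg γ
        apply Fin.ext
        rw [hσval, hF]
        simp only
        rw [if_neg (by omega), if_neg (by omega)]


lemma combine_lemma (m : ℕ) (hm : 2 ≤ m) (A : Fin m → ℝ) (B : Fin m → Fin m → ℝ) (q : ℝ)
    (hq : 0 < q) (hA : ∀ i, 0 < A i) (hB : ∀ i j, 0 < B i j)
    (h13 : ∀ j, (∏ i ∈ Finset.univ.filter (fun i => i ≠ j), B i j) ≤ q)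
    (hpair : ∀ i j, i ≠ j → A i * A j ≤ B i j * B j i)
    (hAq : (∏ i, A i) ^ (m - 1) = q ^ m) :
    ∀ j, (∏ i ∈ Finset.univ.filter (fun i => i ≠ j), B i j) = q := by
  classical
  set S : Fin m → Finset (Fin m) := fun j => Finset.univ.filter (fun i => i ≠ j) with hS
  have hmemS : ∀ {i j : Fin m}, i ∈ S j ↔ i ≠ j := by
    intro i j; simp [hS]
  have hScard : ∀ j, (S j).card = m - 1 := by
    intro j
    show (Finset.univ.filter (fun i => i ≠ j)).card = m - 1
    rw [Finset.filter_ne']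
    simp [Finset.card_erase_of_mem]
  have hcond : ∀ (x y : Fin m), x ∈ Finset.univ ∧ y ∈ S x ↔ x ∈ S y ∧ y ∈ Finset.univ := by
    intro x y
    simp [hmemS, ne_comm]
  set T : Fin m → ℝ := fun j => ∏ i ∈ S j, B i j with hT
  have hTpos : ∀ j, 0 < T j := fun j => Finset.prod_pos (fun i _ => hB i j)
  have hswap : (∏ j, ∏ i ∈ S j, B j i) = ∏ j, T j :=
    Finset.prod_comm' hcond
  have hsq : (∏ j, T j) ^ 2 = ∏ j, ∏ i ∈ S j, (B i j * B j i) := by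
    have h0 : (∏ j, T j) ^ 2 = (∏ j, ∏ i ∈ S j, B i j) * (∏ j, ∏ i ∈ S j, B j i) := by
      rw [sq]
      congr 1
      exact hswap.symm
    rw [h0, ← Finset.prod_mul_distrib]
    exact Finset.prod_congr rfl fun j _ => (Finset.prod_mul_distrib).symm
  have hAcalc : (∏ j, ∏ i ∈ S j, (A i * A j)) = (q ^ m) ^ 2 := by
    have h1 : (∏ j, ∏ i ∈ S j, A i) = q ^ m := by
      have hc : (∏ j, ∏ i ∈ S j, A i) = ∏ i, ∏ j ∈ S i, A i := Finset.prod_comm' hcond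
      rw [hc]
      calc (∏ i, ∏ _j ∈ S i, A i) = ∏ i, A i ^ (m - 1) := by
            apply Finset.prod_congr rfl; intro i _; rw [Finset.prod_const, hScard]
        _ = (∏ i, A i) ^ (m - 1) := by rw [← Finset.prod_pow]
        _ = q ^ m := hAq
    have h2 : (∏ j, ∏ i ∈ S j, A j) = q ^ m := by
      calc (∏ j, ∏ _i ∈ S j, A j) = ∏ j, A j ^ (m - 1) := by
            apply Finset.prod_congr rfl; intro j _; rw [Finset.prod_const, hScard]
        _ = (∏ j, A j) ^ (m - 1) := by rw [← Finset.prod_pow]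
        _ = q ^ m := hAq
    calc (∏ j, ∏ i ∈ S j, (A i * A j))
        = (∏ j, ∏ i ∈ S j, A i) * (∏ j, ∏ i ∈ S j, A j) := by
          rw [← Finset.prod_mul_distrib]
          apply Finset.prod_congr rfl; intro j _; rw [← Finset.prod_mul_distrib]
      _ = (q ^ m) ^ 2 := by rw [h1, h2, sq]
  have hlow : (q ^ m) ^ 2 ≤ (∏ j, T j) ^ 2 := by
    rw [hsq, ← hAcalc]
    apply Finset.prod_le_prod
    · intro j _; exact Finset.prod_nonneg fun i _ => (mul_pos (hA i) (hA j)).le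
    · intro j _
      apply Finset.prod_le_prod
      · intro i _; exact (mul_pos (hA i) (hA j)).le
      · intro i hi; exact hpair i j (hmemS.mp hi)
  have hTq : (∏ j, T j) = q ^ m := by
    have hle : (∏ j, T j) ≤ q ^ m := by
      calc (∏ j, T j) ≤ ∏ _j : Fin m, q :=
            Finset.prod_le_prod (fun j _ => (hTpos j).le) (fun j _ => h13 j)
        _ = q ^ m := by rw [Finset.prod_const]; simp
    have hge : q ^ m ≤ ∏ j, T j := by
      have h1 : (0:ℝ) ≤ q ^ m := (pow_pos hq m).le
      have h2 : (0:ℝ) ≤ ∏ j, T j := (Finset.prod_pos (fun j _ => hTpos j)).le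
      exact (pow_le_pow_iff_left₀ h1 h2 two_ne_zero).mp hlow
    exact le_antisymm hle hge
  intro j
  by_contra hne
  have hlt : T j < q := lt_of_le_of_ne (h13 j) hne
  have hstrict : (∏ j', T j') < ∏ _j' : Fin m, q :=
    Finset.prod_lt_prod (fun i _ => hTpos i) (fun i _ => h13 i) ⟨j, Finset.mem_univ j, hlt⟩
  rw [hTq, Finset.prod_const] at hstrict
  simp at hstrict


/-- abstract equality-propagation in the induction proving the higher
Alexandrov–Fenchel inequality. `P` is symmetric, multilinear under nonnegative
combinations, positive on the subcone `C⁺`, and satisfies the quadratic AF inequality;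
moreover the level-`(m−1)` product inequality (the induction hypothesis, whose equality
case is characterized) is assumed. If `γ₁,…,γₙ ∈ C⁺` satisfy the level-`m` product
equality `P(γ)^m = ∏_{i=1}^m P(γᵢ[m], γ_{m+1},…,γₙ)`, then for every `1 ≤ j ≤ m` equality
holds in inequality (13):
`P(γ)^{m−1} = ∏_{1≤i≤m, i≠j} P(γᵢ^{m−1}γⱼ, γ_{m+1},…,γₙ)`. -/
theorem abstract_af_equality_propagation {V : Type*} [AddCommGroup V] [Module ℝ V]
    (C Cp : Set V) (hsub : Cp ⊆ C)
    (hC_add : ∀ u ∈ C, ∀ v ∈ C, u + v ∈ C)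
    (hC_smul : ∀ (a : ℝ), 0 ≤ a → ∀ u ∈ C, a • u ∈ C)
    (hCp_add : ∀ u ∈ Cp, ∀ v ∈ Cp, u + v ∈ Cp)
    (hCp_smul : ∀ (a : ℝ), 0 < a → ∀ u ∈ Cp, a • u ∈ Cp)
    (n : ℕ) (P : (Fin (n + 2) → V) → ℝ)
    (hsymm : ∀ (σ : Equiv.Perm (Fin (n + 2))) (u : Fin (n + 2) → V),
      (∀ k, u k ∈ C) → P (u ∘ σ) = P u)
    (hmul : ∀ (u : Fin (n + 2) → V), (∀ k, u k ∈ C) → ∀ (i : Fin (n + 2)) (a b : ℝ),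
      0 ≤ a → 0 ≤ b → ∀ x ∈ C, ∀ y ∈ C,
        P (Function.update u i (a • x + b • y)) =
          a * P (Function.update u i x) + b * P (Function.update u i y))
    (hpos : ∀ u : Fin (n + 2) → V, (∀ k, u k ∈ Cp) → 0 < P u)
    (hAF : ∀ (w : Fin (n + 2) → V), (∀ k, w k ∈ Cp) → ∀ u ∈ Cp, ∀ v ∈ Cp,
      P (Function.update (Function.update w 0 u) 1 u) *
          P (Function.update (Function.update w 0 v) 1 v) ≤
        (P (Function.update (Function.update w 0 u) 1 v)) ^ 2)
    (m : ℕ) (hm : 2 ≤ m) (hmn : m ≤ n + 2)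
    -- the level-(m−1) product inequality (induction hypothesis)
    (hInd : ∀ δ : Fin (n + 2) → V, (∀ k, δ k ∈ Cp) →
      (∏ i : Fin (m - 1), P fun k =>
        if (k : ℕ) < m - 1 then δ (Fin.castLE ((Nat.sub_le m 1).trans hmn) i) else δ k) ≤
        P δ ^ (m - 1))
    (γ : Fin (n + 2) → V) (hγ : ∀ k, γ k ∈ Cp)
    -- the level-m product equality
    (heq : P γ ^ m =
      ∏ i : Fin m, P fun k => if (k : ℕ) < m then γ (Fin.castLE hmn i) else γ k) :
    ∀ j : Fin m,
      P γ ^ (m - 1) =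
        ∏ i ∈ Finset.univ.filter (fun i : Fin m => i ≠ j),
          P fun k =>
            if (k : ℕ) < m - 1 then γ (Fin.castLE hmn i)
            else if (k : ℕ) = m - 1 then γ (Fin.castLE hmn j)
            else γ k := by

  intro j
  have hPγ : 0 < P γ := hpos γ hγ
  have hq : 0 < P γ ^ (m - 1) := pow_pos hPγ _
  have hApos : ∀ i : Fin m,
      0 < P fun k => if (k : ℕ) < m then γ (Fin.castLE hmn i) else γ k := by
    intro i
    apply hpos
    intro k
    split_ifs
    · exact hγ _
    · exact hγ k
  have hBpos : ∀ i j' : Fin m,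
      0 < P fun k => if (k : ℕ) < m - 1 then γ (Fin.castLE hmn i)
        else if (k : ℕ) = m - 1 then γ (Fin.castLE hmn j') else γ k := by
    intro i j'
    apply hpos
    intro k
    split_ifs
    · exact hγ _
    · exact hγ _
    · exact hγ k
  have hAq : (∏ i : Fin m, P fun k => if (k : ℕ) < m then γ (Fin.castLE hmn i) else γ k) ^ (m - 1)
      = (P γ ^ (m - 1)) ^ m := by
    rw [← heq, ← pow_mul, ← pow_mul, Nat.mul_comm]
  exact (combine_lemma m hm
    (fun i => P fun k => if (k : ℕ) < m then γ (Fin.castLE hmn i) else γ k)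
    (fun i j' => P fun k => if (k : ℕ) < m - 1 then γ (Fin.castLE hmn i)
      else if (k : ℕ) = m - 1 then γ (Fin.castLE hmn j') else γ k)
    (P γ ^ (m - 1)) hq hApos hBpos
    (fun j' => prod13 C Cp hsub n P hsymm m hm hmn hInd γ hγ j')
    (fun i j' _ => pair_step C Cp n P hsub hsymm hpos hAF m hm hmn γ hγ i j')
    hAq j).symm
end
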